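/- arXiv:1312.2050 — 8 statements merged into one kernel-verified Lean document; each statement's English description precedes it below -/
import Mathlib

section
/- Let Θ be an n×K membership matrix with community sizes n_1,...,n_K all positive, B a symmetric full-rank K×K real matrix, and P = Θ B Θ^T. If P = U D U^T is an eigendecomposition with U ∈ ℝ^{n×K} having orthonormal columns and D ∈ ℝ^{K×K} diagonal (using the K nonzero eigenvalues), then there exists X ∈ ℝ^{K×K} such that U = Θ X and for all 1 ≤ k < ℓ ≤ K, ‖X_{k*} − X_{ℓ*}‖ = √(1/n_k + 1/n_ℓ), where X_{k*} denotes the k-th row of X. -/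
open Matrix

/-- Eigenvector structure of SBM mean matrix. -/
theorem stmt1 (n K : ℕ) (g : Fin n → Fin K)
    (Θ : Matrix (Fin n) (Fin K) ℝ)
    (hΘ : ∀ i k, Θ i k = if g i = k then 1 else 0)
    (nk : Fin K → ℕ)
    (hnk : ∀ k, nk k = (Finset.univ.filter (fun i => g i = k)).card)
    (hpos : ∀ k, 0 < nk k)
    (B : Matrix (Fin K) (Fin K) ℝ) (hBsymm : B.IsSymm) (hBrank : IsUnit B.det)
    (U : Matrix (Fin n) (Fin K) ℝ) (D : Matrix (Fin K) (Fin K) ℝ)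
    (hDdiag : ∀ k l, k ≠ l → D k l = 0) (hDnz : ∀ k, D k k ≠ 0)
    (hUorth : Uᵀ * U = 1)
    (hP : Θ * B * Θᵀ = U * D * Uᵀ) :
    ∃ X : Matrix (Fin K) (Fin K) ℝ, U = Θ * X ∧
      ∀ k l : Fin K, k < l →
        Real.sqrt (∑ j, (X k j - X l j) ^ 2)
          = Real.sqrt ((nk k : ℝ)⁻¹ + (nk l : ℝ)⁻¹) := by
  -- D is an invertible diagonal matrix
  have hDeq : D = Matrix.diagonal (fun k => D k k) := by
    ext k l
    by_cases h : k = l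
    · subst h; simp
    · simp [Matrix.diagonal_apply_ne _ h, hDdiag k l h]
  obtain ⟨Dinv, hDinv⟩ : ∃ M, M = Matrix.diagonal (fun k => (D k k)⁻¹) := ⟨_, rfl⟩
  have hDDinv : D * Dinv = 1 := by
    rw [hDinv]
    ext k l
    rw [Matrix.mul_diagonal]
    by_cases h : k = l
    · subst h; simp [mul_inv_cancel₀ (hDnz k)]
    · simp [Matrix.one_apply_ne h, hDdiag k l h]
  obtain ⟨X, hX⟩ : ∃ M, M = B * Θᵀ * U * Dinv := ⟨_, rfl⟩
  have hUX : U = Θ * X := by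
    have h1 : U * D * Uᵀ * (U * Dinv) = U := by
      rw [Matrix.mul_assoc (U * D) Uᵀ, ← Matrix.mul_assoc Uᵀ U Dinv, hUorth,
        Matrix.one_mul, Matrix.mul_assoc, hDDinv, Matrix.mul_one]
    calc U = U * D * Uᵀ * (U * Dinv) := h1.symm
      _ = Θ * B * Θᵀ * (U * Dinv) := by rw [hP]
      _ = Θ * X := by rw [hX]; simp only [Matrix.mul_assoc]
  refine ⟨X, hUX, ?_⟩
  -- ΘᵀΘ is the diagonal matrix of community sizes
  have hΔ : Θᵀ * Θ = Matrix.diagonal (fun k => (nk k : ℝ)) := by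
    ext k l
    simp only [Matrix.mul_apply, Matrix.transpose_apply]
    have hterm : ∀ i, Θ i k * Θ i l = if g i = k ∧ g i = l then (1:ℝ) else 0 := by
      intro i
      rw [hΘ, hΘ]
      by_cases h1 : g i = k <;> by_cases h2 : g i = l <;> simp [h1, h2]
    rw [Finset.sum_congr rfl (fun i _ => hterm i)]
    by_cases h : k = l
    · subst h
      simp only [and_self, Matrix.diagonal_apply_eq]
      rw [Finset.sum_boole, hnk]
    · rw [Matrix.diagonal_apply_ne _ h]
      apply Finset.sum_eq_zero
      intro i _
      rw [if_neg]
      rintro ⟨h1, h2⟩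
      exact h (h1 ▸ h2)
  -- S = diag(sqrt(nk))
  obtain ⟨S, hS⟩ : ∃ M, M = Matrix.diagonal (fun k => Real.sqrt (nk k)) := ⟨_, rfl⟩
  have hSS : S * S = Matrix.diagonal (fun k => (nk k : ℝ)) := by
    rw [hS, Matrix.diagonal_mul_diagonal,
      show (fun k => Real.sqrt (nk k) * Real.sqrt (nk k)) = fun k => ((nk k : ℝ)) from
        funext fun k => Real.mul_self_sqrt (Nat.cast_nonneg _)]
  have hST : Sᵀ = S := by rw [hS]; exact Matrix.diagonal_transpose _
  have hXX : Xᵀ * (Θᵀ * (Θ * X)) = 1 := by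
    have h := hUorth
    rw [hUX, Matrix.transpose_mul] at h
    simpa [Matrix.mul_assoc] using h
  have hYtY : (S * X)ᵀ * (S * X) = 1 := by
    rw [Matrix.transpose_mul, hST]
    have h2 : Xᵀ * (S * (S * X)) = 1 := by
      rw [← Matrix.mul_assoc S S X, hSS, ← hΔ]
      simpa [Matrix.mul_assoc] using hXX
    simpa [Matrix.mul_assoc] using h2
  have hYYt : (S * X) * (S * X)ᵀ = 1 := mul_eq_one_comm.mp hYtY
  have hsqrt_ne : ∀ k : Fin K, Real.sqrt (nk k) ≠ 0 := fun k =>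
    Real.sqrt_ne_zero'.mpr (by exact_mod_cast hpos k)
  have hXXt : ∀ k l, (∑ j, X k j * X l j)
      = (if k = l then (1:ℝ) else 0) / (Real.sqrt (nk k) * Real.sqrt (nk l)) := by
    intro k l
    have h1 : (S * ((X * Xᵀ) * S)) k l = (1 : Matrix (Fin K) (Fin K) ℝ) k l := by
      rw [show S * ((X * Xᵀ) * S) = S * X * (S * X)ᵀ by
        rw [Matrix.transpose_mul, hST]; simp only [Matrix.mul_assoc], hYYt]
    rw [hS, Matrix.diagonal_mul, Matrix.mul_diagonal, Matrix.one_apply] at h1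
    have h2 : (X * Xᵀ) k l = ∑ j, X k j * X l j := by
      simp [Matrix.mul_apply, Matrix.transpose_apply]
    rw [h2] at h1
    rw [eq_div_iff (mul_ne_zero (hsqrt_ne k) (hsqrt_ne l))]
    linear_combination h1
  intro k l hkl
  have hne : k ≠ l := ne_of_lt hkl
  have expand : ∑ j, (X k j - X l j) ^ 2
      = (∑ j, X k j * X k j) - 2 * (∑ j, X k j * X l j) + (∑ j, X l j * X l j) := by
    rw [Finset.sum_congr rfl (fun j _ => show (X k j - X l j)^2
      = X k j * X k j - 2 * (X k j * X l j) + X l j * X l j by ring)]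
    rw [Finset.sum_add_distrib, Finset.sum_sub_distrib, ← Finset.mul_sum]
  rw [expand, hXXt, hXXt, hXXt, if_pos rfl, if_pos rfl, if_neg hne]
  congr 1
  rw [Real.mul_self_sqrt (Nat.cast_nonneg (nk k)), Real.mul_self_sqrt (Nat.cast_nonneg (nk l))]
  field_simp
  ring
end

section
/- Let Θ be an n×K membership matrix, B a symmetric full-rank K×K matrix, and Δ = diag(√n_1,...,√n_K) with all n_k > 0. If Z D Z^T is an eigendecomposition of ΔBΔ (with Z orthogonal, D diagonal), then P := ΘBΘ^T = UDU^T where U = ΘΔ^{-1}Z has orthonormal columns; moreover the rows of Δ^{-1}Z are pairwise orthogonal and the k-th row of Δ^{-1}Z has Euclidean norm 1/√n_k. -/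
open Matrix

/-- Eigendecomposition of P = ΘBΘᵀ from that of ΔBΔ. -/
theorem stmt2 (n K : ℕ) (g : Fin n → Fin K)
    (Θ : Matrix (Fin n) (Fin K) ℝ)
    (hΘ : ∀ i k, Θ i k = if g i = k then 1 else 0)
    (nk : Fin K → ℕ)
    (hnk : ∀ k, nk k = (Finset.univ.filter (fun i => g i = k)).card)
    (hpos : ∀ k, 0 < nk k)
    (B : Matrix (Fin K) (Fin K) ℝ) (hBsymm : B.IsSymm) (hBrank : IsUnit B.det)
    (Δ : Matrix (Fin K) (Fin K) ℝ)
    (hΔ : Δ = Matrix.diagonal (fun k => Real.sqrt (nk k)))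
    (Z D : Matrix (Fin K) (Fin K) ℝ)
    (hZorth : Zᵀ * Z = 1)
    (hDdiag : ∀ k l, k ≠ l → D k l = 0)
    (hdecomp : Δ * B * Δ = Z * D * Zᵀ) :
    (Θ * B * Θᵀ = (Θ * Δ⁻¹ * Z) * D * (Θ * Δ⁻¹ * Z)ᵀ) ∧
    ((Θ * Δ⁻¹ * Z)ᵀ * (Θ * Δ⁻¹ * Z) = 1) ∧
    (∀ k l : Fin K, k ≠ l → ∑ j, (Δ⁻¹ * Z) k j * (Δ⁻¹ * Z) l j = 0) ∧
    (∀ k : Fin K, Real.sqrt (∑ j, ((Δ⁻¹ * Z) k j) ^ 2) = 1 / Real.sqrt (nk k)) := by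
  have hs : ∀ k, (0:ℝ) < Real.sqrt (nk k) := fun k =>
    Real.sqrt_pos.2 (by exact_mod_cast hpos k)
  have hΔinv : Δ⁻¹ = Matrix.diagonal (fun k => (Real.sqrt (nk k))⁻¹) := by
    rw [hΔ]
    apply Matrix.inv_eq_right_inv
    rw [Matrix.diagonal_mul_diagonal]
    rw [show (fun k => Real.sqrt (nk k) * (Real.sqrt (nk k))⁻¹) = fun _ => (1:ℝ) from
      funext fun k => mul_inv_cancel₀ (hs k).ne']
    exact Matrix.diagonal_one
  have hΔΔ : Δ * Δ = Matrix.diagonal (fun k => (nk k : ℝ)) := by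
    rw [hΔ, Matrix.diagonal_mul_diagonal,
      show (fun i => Real.sqrt (nk i) * Real.sqrt (nk i)) = fun i => ((nk i : ℝ)) from
        funext fun i => Real.mul_self_sqrt (Nat.cast_nonneg _)]
  -- ΘᵀΘ = Δ * Δ
  have hTT : Θᵀ * Θ = Δ * Δ := by
    rw [hΔΔ]
    ext k l
    simp only [Matrix.mul_apply, Matrix.transpose_apply, hΘ, Matrix.diagonal_apply]
    by_cases h : k = l
    · subst h
      rw [if_pos rfl, hnk, Finset.card_filter]
      push_cast
      apply Finset.sum_congr rfl
      intro i _
      by_cases hg : g i = k <;> simp [hg]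
    · rw [if_neg h]
      apply Finset.sum_eq_zero
      intro i _
      by_cases hg : g i = k
      · have : g i ≠ l := fun hl => h (hg ▸ hl ▸ rfl)
        simp [this]
      · simp [hg]
  have hΔdet : IsUnit Δ.det := by
    rw [hΔ, Matrix.det_diagonal]
    exact isUnit_iff_ne_zero.2 (Finset.prod_ne_zero_iff.2 fun k _ => (hs k).ne')
  have hΔΔinv : Δ * Δ⁻¹ = 1 := Matrix.mul_nonsing_inv Δ hΔdet
  have hΔinvΔ : Δ⁻¹ * Δ = 1 := Matrix.nonsing_inv_mul Δ hΔdet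
  have hZZt : Z * Zᵀ = 1 := mul_eq_one_comm.mp hZorth
  have hΔinvT : (Δ⁻¹)ᵀ = Δ⁻¹ := by rw [hΔinv, Matrix.diagonal_transpose]
  have hrow : (Δ⁻¹ * Z) * (Δ⁻¹ * Z)ᵀ = Δ⁻¹ * Δ⁻¹ := by
    rw [Matrix.transpose_mul, hΔinvT, Matrix.mul_assoc, ← Matrix.mul_assoc Z, hZZt,
      Matrix.one_mul]
  have hentry : ∀ k l, ∑ j, (Δ⁻¹ * Z) k j * (Δ⁻¹ * Z) l j = (Δ⁻¹ * Δ⁻¹) k l := by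
    intro k l
    rw [← hrow]
    simp [Matrix.mul_apply, Matrix.transpose_apply, mul_comm]
  refine ⟨?_, ?_, ?_, ?_⟩
  · calc Θ * B * Θᵀ = Θ * (Δ⁻¹ * (Δ * B * Δ) * Δ⁻¹) * Θᵀ := by
          rw [show Δ⁻¹ * (Δ * B * Δ) * Δ⁻¹ = (Δ⁻¹ * Δ) * B * (Δ * Δ⁻¹) by
            simp only [Matrix.mul_assoc], hΔinvΔ, hΔΔinv, Matrix.one_mul, Matrix.mul_one]
    _ = (Θ * Δ⁻¹ * Z) * D * (Θ * Δ⁻¹ * Z)ᵀ := by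
          rw [hdecomp]
          simp only [Matrix.transpose_mul, hΔinvT, Matrix.mul_assoc]
  · calc (Θ * Δ⁻¹ * Z)ᵀ * (Θ * Δ⁻¹ * Z)
        = Zᵀ * (Δ⁻¹ * ((Θᵀ * Θ) * (Δ⁻¹ * Z))) := by
          simp only [Matrix.transpose_mul, hΔinvT, Matrix.mul_assoc]
      _ = 1 := by
          rw [hTT, show Δ⁻¹ * (Δ * Δ * (Δ⁻¹ * Z)) = (Δ⁻¹ * Δ) * ((Δ * Δ⁻¹) * Z) by
            simp only [Matrix.mul_assoc], hΔinvΔ, hΔΔinv, Matrix.one_mul, Matrix.one_mul,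
            hZorth]
  · intro k l hkl
    rw [hentry, hΔinv, Matrix.diagonal_mul_diagonal, Matrix.diagonal_apply, if_neg hkl]
  · intro k
    have h2 : (∑ j, ((Δ⁻¹ * Z) k j) ^ 2) = ((Real.sqrt (nk k))⁻¹) ^ 2 := by
      calc (∑ j, ((Δ⁻¹ * Z) k j) ^ 2) = ∑ j, (Δ⁻¹ * Z) k j * (Δ⁻¹ * Z) k j := by
            simp [sq]
        _ = (Δ⁻¹ * Δ⁻¹) k k := hentry k k
        _ = ((Real.sqrt (nk k))⁻¹) ^ 2 := by
            rw [hΔinv, Matrix.diagonal_mul_diagonal, Matrix.diagonal_apply, if_pos rfl, sq]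
    rw [h2, Real.sqrt_sq (by positivity), one_div]
end

section
/- Consider a degree-corrected block model mean matrix P = diag(ψ) Θ B Θ^T diag(ψ), where Θ is an n×K membership matrix, B is symmetric K×K, ψ has positive entries, and P has rank K. If P = UDU^T is the rank-K eigendecomposition (U ∈ ℝ^{n×K} with orthonormal columns, D diagonal invertible), then there exists a K×K orthogonal matrix H such that for every k and every i ∈ G_k, the i-th row of U equals ψ̃_i H_{k*}, where ψ̃_i = ψ_i/‖φ_k‖ and φ_k is ψ restricted to community G_k (zero elsewhere). -/
open Matrix

/-- Spectral structure of the DCBM mean matrix. -/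
theorem stmt4 (n K : ℕ) (g : Fin n → Fin K)
    (Θ : Matrix (Fin n) (Fin K) ℝ)
    (hΘ : ∀ i k, Θ i k = if g i = k then 1 else 0)
    (ψ : Fin n → ℝ) (hψ : ∀ i, 0 < ψ i)
    (φ : Fin K → Fin n → ℝ)
    (hφ : ∀ k i, φ k i = if g i = k then ψ i else 0)
    (φnorm : Fin K → ℝ)
    (hφnorm : ∀ k, φnorm k = Real.sqrt (∑ i, (φ k i) ^ 2))
    (hpos : ∀ k, 0 < φnorm k)
    (B : Matrix (Fin K) (Fin K) ℝ) (hBsymm : B.IsSymm)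
    (P : Matrix (Fin n) (Fin n) ℝ)
    (hPdef : P = Matrix.diagonal ψ * Θ * B * Θᵀ * Matrix.diagonal ψ)
    (hrank : P.rank = K)
    (U : Matrix (Fin n) (Fin K) ℝ) (D : Matrix (Fin K) (Fin K) ℝ)
    (hDdiag : ∀ k l, k ≠ l → D k l = 0) (hDnz : ∀ k, D k k ≠ 0)
    (hUorth : Uᵀ * U = 1)
    (hP : P = U * D * Uᵀ) :
    ∃ H : Matrix (Fin K) (Fin K) ℝ, Hᵀ * H = 1 ∧
      ∀ (k : Fin K) (i : Fin n), g i = k →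
        ∀ j, U i j = (ψ i / φnorm k) * H k j := by
  set V : Matrix (Fin n) (Fin K) ℝ :=
    Matrix.of (fun i l => if g i = l then ψ i / φnorm l else 0) with hV
  have hnormsq : ∀ k, φnorm k ^ 2 = ∑ i, (φ k i) ^ 2 := by
    intro k
    rw [hφnorm, Real.sq_sqrt]
    exact Finset.sum_nonneg fun i _ => sq_nonneg _
  -- columns of V are orthonormal
  have hVV : Vᵀ * V = 1 := by
    ext k l
    rw [Matrix.mul_apply]
    by_cases hkl : k = l
    · subst hkl
      have hterm : ∀ i, Vᵀ k i * V i k = (φ k i) ^ 2 / (φnorm k) ^ 2 := by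
        intro i
        simp only [Matrix.transpose_apply, hV, Matrix.of_apply, hφ]
        by_cases h : g i = k <;> simp [h, div_mul_div_comm, pow_two]
      rw [Finset.sum_congr rfl fun i _ => hterm i, ← Finset.sum_div,
        ← hnormsq, div_self (pow_ne_zero 2 (ne_of_gt (hpos k)))]
      simp [Matrix.one_apply]
    · have hterm : ∀ i, Vᵀ k i * V i l = 0 := by
        intro i
        simp only [Matrix.transpose_apply, hV, Matrix.of_apply]
        by_cases h1 : g i = k
        · have h2 : g i ≠ l := fun h => hkl (h1 ▸ h)
          simp [h1, h2, hkl]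
        · simp [h1]
      rw [Finset.sum_congr rfl fun i _ => hterm i]
      simp [Matrix.one_apply, hkl]
  -- diagonal ψ * Θ = V * diagonal φnorm
  have hDθ : Matrix.diagonal ψ * Θ = V * Matrix.diagonal φnorm := by
    ext i k
    rw [Matrix.diagonal_mul, Matrix.mul_diagonal]
    simp only [hΘ, hV, Matrix.of_apply]
    by_cases h : g i = k
    · simp [h, div_mul_cancel₀ _ (ne_of_gt (hpos k))]
    · simp [h]
  -- P = V * M * Vᵀ
  set M : Matrix (Fin K) (Fin K) ℝ :=
    Matrix.diagonal φnorm * B * Matrix.diagonal φnorm with hM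
  have hPV : P = V * M * Vᵀ := by
    have h1 : P = (Matrix.diagonal ψ * Θ) * B * (Matrix.diagonal ψ * Θ)ᵀ := by
      rw [hPdef, Matrix.transpose_mul, Matrix.diagonal_transpose]
      simp only [Matrix.mul_assoc]
    rw [h1, hDθ, Matrix.transpose_mul, Matrix.diagonal_transpose, hM]
    simp only [Matrix.mul_assoc]
  have hVVP : V * Vᵀ * P = P := by
    rw [hPV]
    have h2 : V * Vᵀ * (V * M * Vᵀ) = V * ((Vᵀ * V) * (M * Vᵀ)) := by
      simp only [Matrix.mul_assoc]
    rw [h2, hVV, Matrix.one_mul, ← Matrix.mul_assoc]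
  -- inverse of D
  set E : Matrix (Fin K) (Fin K) ℝ := Matrix.diagonal (fun k => (D k k)⁻¹) with hE
  have hDd : D = Matrix.diagonal (fun k => D k k) := by
    ext k l
    by_cases h : k = l
    · subst h; simp
    · rw [Matrix.diagonal_apply_ne _ h]; exact hDdiag k l h
  have hDE : D * E = 1 := by
    rw [hDd, hE, Matrix.diagonal_mul_diagonal]
    have : (fun k => D k k * (D k k)⁻¹) = fun _ => (1 : ℝ) := by
      funext k; exact mul_inv_cancel₀ (hDnz k)
    rw [this, Matrix.diagonal_one]
  have hPU : P * U = U * D := by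
    rw [hP, Matrix.mul_assoc, Matrix.mul_assoc, hUorth, Matrix.mul_one]
  have hU : U = P * U * E := by
    rw [hPU, Matrix.mul_assoc, hDE, Matrix.mul_one]
  have key : V * (Vᵀ * U) = U := by
    have h3 : V * Vᵀ * (P * U * E) = (V * Vᵀ * P) * (U * E) := by
      simp only [Matrix.mul_assoc]
    have h4 : V * (Vᵀ * U) = V * Vᵀ * U := by rw [Matrix.mul_assoc]
    rw [h4]
    conv_lhs => rw [hU]
    rw [h3, hVVP, ← Matrix.mul_assoc, ← hU]
  refine ⟨Vᵀ * U, ?_, ?_⟩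
  · rw [Matrix.transpose_mul, Matrix.transpose_transpose, Matrix.mul_assoc,
      key, hUorth]
  · intro k i hik j
    conv_lhs => rw [← key]
    rw [Matrix.mul_apply]
    have hterm : ∀ l, V i l * (Vᵀ * U) l j =
        if k = l then (ψ i / φnorm k) * (Vᵀ * U) k j else 0 := by
      intro l
      simp only [hV, Matrix.of_apply, hik]
      by_cases h : k = l
      · subst h; simp
      · simp [h]
    rw [Finset.sum_congr rfl fun l _ => hterm l, Finset.sum_ite_eq]
    simp
end

section
/- Let P ∈ ℝ^{n×n} be a symmetric matrix of rank K whose smallest nonzero singular value is at least γ > 0, and let A ∈ ℝ^{n×n} be any symmetric matrix. Let Û, U ∈ ℝ^{n×K} consist of K leading eigenvectors (orthonormal columns corresponding to the K largest-in-absolute-value eigenvalues) of A and P respectively. Then there exists a K×K orthogonal matrix Q such that ‖Û − UQ‖_F ≤ (2√(2K)/γ) ‖A − P‖, where ‖·‖ is the spectral norm and ‖·‖_F the Frobenius norm. -/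
open Matrix

/-- Spectral (ℓ2 operator) norm of a real square matrix. -/
noncomputable def specNorm {n : ℕ} (A : Matrix (Fin n) (Fin n) ℝ) : ℝ :=
  ‖LinearMap.toContinuousLinearMap (Matrix.toEuclideanLin A)‖

/-- Frobenius norm. -/
noncomputable def frobNorm {n K : ℕ} (M : Matrix (Fin n) (Fin K) ℝ) : ℝ :=
  Real.sqrt (∑ i, ∑ j, (M i j) ^ 2)

namespace Stmt6Aux

variable {a b r k m : ℕ}

lemma sum_sq_eq_dot (v : Fin a → ℝ) : ∑ i, v i ^ 2 = v ⬝ᵥ v := by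
  simp [dotProduct, sq]

lemma dot_mulVec_self (M : Matrix (Fin a) (Fin b) ℝ) (x y : Fin b → ℝ) :
    (M *ᵥ x) ⬝ᵥ (M *ᵥ y) = x ⬝ᵥ ((Mᵀ * M) *ᵥ y) := by
  conv_rhs => rw [← mulVec_mulVec, dotProduct_mulVec, vecMul_transpose]

lemma sum_sq_mulVec (M : Matrix (Fin a) (Fin b) ℝ) (x : Fin b → ℝ) :
    ∑ i, (M *ᵥ x) i ^ 2 = x ⬝ᵥ ((Mᵀ * M) *ᵥ x) := by
  rw [sum_sq_eq_dot, dot_mulVec_self]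

lemma sum_sq_mulVec_orth (C : Matrix (Fin a) (Fin b) ℝ) (hC : Cᵀ * C = 1) (x : Fin b → ℝ) :
    ∑ i, (C *ᵥ x) i ^ 2 = ∑ j, x j ^ 2 := by
  rw [sum_sq_mulVec, hC, one_mulVec, sum_sq_eq_dot]


lemma proj_idem (U : Matrix (Fin a) (Fin b) ℝ) (hU : Uᵀ * U = 1) :
    ((1 : Matrix (Fin a) (Fin a) ℝ) - U * Uᵀ) * (1 - U * Uᵀ) = 1 - U * Uᵀ := by
  have h2 : U * Uᵀ * (U * Uᵀ) = U * Uᵀ := by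
    rw [Matrix.mul_assoc U, ← Matrix.mul_assoc Uᵀ U, hU, Matrix.one_mul]
  simp only [mul_sub, sub_mul, mul_one, one_mul, h2]
  abel

lemma proj_symm (U : Matrix (Fin a) (Fin b) ℝ) :
    ((1 : Matrix (Fin a) (Fin a) ℝ) - U * Uᵀ)ᵀ = 1 - U * Uᵀ := by
  rw [transpose_sub, transpose_one, transpose_mul, transpose_transpose]

lemma sum_sq_proj (U : Matrix (Fin a) (Fin b) ℝ) (hU : Uᵀ * U = 1) (y : Fin a → ℝ) :
    ∑ i, (((1 : Matrix (Fin a) (Fin a) ℝ) - U * Uᵀ) *ᵥ y) i ^ 2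
      = ∑ i, y i ^ 2 - ∑ i, (Uᵀ *ᵥ y) i ^ 2 := by
  rw [sum_sq_mulVec, proj_symm U, proj_idem U hU, sum_sq_mulVec, transpose_transpose,
    sub_mulVec, one_mulVec, dotProduct_sub, sum_sq_eq_dot]

lemma sum_sq_transpose_le (U : Matrix (Fin a) (Fin b) ℝ) (hU : Uᵀ * U = 1) (y : Fin a → ℝ) :
    ∑ i, (Uᵀ *ᵥ y) i ^ 2 ≤ ∑ i, y i ^ 2 := by
  have h := sum_sq_proj U hU y
  have h0 : (0:ℝ) ≤ ∑ i, (((1 : Matrix (Fin a) (Fin a) ℝ) - U * Uᵀ) *ᵥ y) i ^ 2 :=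
    Finset.sum_nonneg fun i _ => sq_nonneg _
  linarith

lemma sum_sq_proj_le (U : Matrix (Fin a) (Fin b) ℝ) (hU : Uᵀ * U = 1) (y : Fin a → ℝ) :
    ∑ i, (((1 : Matrix (Fin a) (Fin a) ℝ) - U * Uᵀ) *ᵥ y) i ^ 2 ≤ ∑ i, y i ^ 2 := by
  have h := sum_sq_proj U hU y
  have h0 : (0:ℝ) ≤ ∑ i, (Uᵀ *ᵥ y) i ^ 2 := Finset.sum_nonneg fun i _ => sq_nonneg _
  linarith

/-! ### Frobenius helpers -/

noncomputable def fr2 (M : Matrix (Fin a) (Fin b) ℝ) : ℝ := ∑ i, ∑ j, M i j ^ 2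

lemma fr2_nonneg (M : Matrix (Fin a) (Fin b) ℝ) : 0 ≤ fr2 M :=
  Finset.sum_nonneg fun i _ => Finset.sum_nonneg fun j _ => sq_nonneg _

lemma fr2_neg (M : Matrix (Fin a) (Fin b) ℝ) : fr2 (-M) = fr2 M := by
  simp [fr2]

lemma frobNorm_eq (M : Matrix (Fin a) (Fin b) ℝ) : frobNorm M = Real.sqrt (fr2 M) := rfl

lemma fr2_eq_trace (M : Matrix (Fin a) (Fin b) ℝ) : fr2 M = (Mᵀ * M).trace := by
  simp only [fr2, trace, Matrix.diag, mul_apply, transpose_apply, sq]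
  rw [Finset.sum_comm]

lemma fr2_col (M : Matrix (Fin a) (Fin b) ℝ) : fr2 M = ∑ j, ∑ i, M i j ^ 2 :=
  Finset.sum_comm

lemma norm_piLp_symm {ι : Type*} [Fintype ι] (v : ι → ℝ) :
    ‖(WithLp.equiv 2 (ι → ℝ)).symm v‖ = Real.sqrt (∑ i, v i ^ 2) := by
  rw [EuclideanSpace.norm_eq]
  simp [Real.norm_eq_abs, sq_abs]

lemma sqrt_fr2_triangle (X Y : Matrix (Fin a) (Fin b) ℝ) :
    Real.sqrt (fr2 (X + Y)) ≤ Real.sqrt (fr2 X) + Real.sqrt (fr2 Y) := by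
  have key : ∀ M : Matrix (Fin a) (Fin b) ℝ,
      Real.sqrt (fr2 M) = ‖(WithLp.equiv 2 (Fin a × Fin b → ℝ)).symm (fun p => M p.1 p.2)‖ := by
    intro M
    have hs := Fintype.sum_prod_type (f := fun p : Fin a × Fin b => M p.1 p.2 ^ 2)
    rw [norm_piLp_symm, fr2, hs]
  rw [key, key, key]
  have : ((WithLp.equiv 2 (Fin a × Fin b → ℝ)).symm (fun p => (X + Y) p.1 p.2)) =
      ((WithLp.equiv 2 (Fin a × Fin b → ℝ)).symm (fun p => X p.1 p.2))
      + ((WithLp.equiv 2 (Fin a × Fin b → ℝ)).symm (fun p => Y p.1 p.2)) := rfl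
  rw [this]
  exact norm_add_le _ _

/-! ### spectral norm helpers -/

lemma specNorm_nonneg (M : Matrix (Fin a) (Fin a) ℝ) : 0 ≤ specNorm M := norm_nonneg _

lemma specNorm_mulVec (M : Matrix (Fin a) (Fin a) ℝ) (x : Fin a → ℝ) :
    Real.sqrt (∑ i, (M *ᵥ x) i ^ 2) ≤ specNorm M * Real.sqrt (∑ i, x i ^ 2) := by
  have h := (LinearMap.toContinuousLinearMap (Matrix.toEuclideanLin M)).le_opNorm
    ((WithLp.equiv 2 (Fin a → ℝ)).symm x)
  rw [show (LinearMap.toContinuousLinearMap (Matrix.toEuclideanLin M))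
        ((WithLp.equiv 2 (Fin a → ℝ)).symm x)
      = (WithLp.equiv 2 (Fin a → ℝ)).symm (M *ᵥ x) from rfl] at h
  rw [norm_piLp_symm, norm_piLp_symm] at h
  exact h

lemma sum_sq_mulVec_le (M : Matrix (Fin a) (Fin a) ℝ) (x : Fin a → ℝ) :
    ∑ i, (M *ᵥ x) i ^ 2 ≤ specNorm M ^ 2 * ∑ i, x i ^ 2 := by
  have h := specNorm_mulVec M x
  have h1 : (0:ℝ) ≤ ∑ i, (M *ᵥ x) i ^ 2 := Finset.sum_nonneg fun i _ => sq_nonneg _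
  have h2 : (0:ℝ) ≤ ∑ i, x i ^ 2 := Finset.sum_nonneg fun i _ => sq_nonneg _
  calc ∑ i, (M *ᵥ x) i ^ 2 = Real.sqrt (∑ i, (M *ᵥ x) i ^ 2) ^ 2 := (Real.sq_sqrt h1).symm
    _ ≤ (specNorm M * Real.sqrt (∑ i, x i ^ 2)) ^ 2 :=
        pow_le_pow_left₀ (Real.sqrt_nonneg _) h 2
    _ = specNorm M ^ 2 * ∑ i, x i ^ 2 := by
        rw [mul_pow, Real.sq_sqrt h2]

lemma le_specNorm_of (M : Matrix (Fin a) (Fin a) ℝ) (x : Fin a → ℝ) (c : ℝ) (hc : 0 ≤ c)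
    (hx : 0 < ∑ i, x i ^ 2) (h : c ^ 2 * ∑ i, x i ^ 2 ≤ ∑ i, (M *ᵥ x) i ^ 2) :
    c ≤ specNorm M := by
  have hmle := sum_sq_mulVec_le M x
  have hcs : c ^ 2 ≤ specNorm M ^ 2 := by
    have := le_trans h hmle
    exact le_of_mul_le_mul_right (by linarith) hx
  calc c = Real.sqrt (c ^ 2) := (Real.sqrt_sq hc).symm
    _ ≤ Real.sqrt (specNorm M ^ 2) := Real.sqrt_le_sqrt hcs
    _ = specNorm M := Real.sqrt_sq (specNorm_nonneg M)


/-! ### matrix extensionality and submatrix lemmas -/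

lemma ext_mulVec {M N : Matrix (Fin a) (Fin b) ℝ} (h : ∀ x, M *ᵥ x = N *ᵥ x) : M = N := by
  ext i j
  have := congrFun (h (Pi.single j 1)) i
  simpa [mulVec_single] using this

lemma mul_submatrix_left (A V : Matrix (Fin a) (Fin a) ℝ) (h : Fin r → Fin a) :
    A * (V.submatrix id h) = (A * V).submatrix id h := by
  ext i j
  simp [mul_apply]

lemma submatrix_mul_diag (V : Matrix (Fin a) (Fin a) ℝ) (Λ : Fin a → ℝ) (h : Fin r → Fin a) :
    (V * diagonal Λ).submatrix id h = V.submatrix id h * diagonal (Λ ∘ h) := by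
  ext i j
  simp [mul_diagonal]

lemma orth_submatrix (V : Matrix (Fin a) (Fin a) ℝ) (hV : Vᵀ * V = 1) (h : Fin r → Fin a)
    (hinj : Function.Injective h) :
    (V.submatrix id h)ᵀ * (V.submatrix id h) = 1 := by
  ext q l
  have he : (Vᵀ * V) (h q) (h l) = (1 : Matrix (Fin a) (Fin a) ℝ) (h q) (h l) := by rw [hV]
  simp only [mul_apply, transpose_apply, submatrix_apply, id_eq] at he ⊢
  rw [he, one_apply, one_apply]
  simp [hinj.eq_iff]

lemma eig_cols (A V : Matrix (Fin a) (Fin a) ℝ) (Λ : Fin a → ℝ)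
    (hVorth : Vᵀ * V = 1) (hAV : A = V * Matrix.diagonal Λ * Vᵀ) (h : Fin r → Fin a) :
    A * (V.submatrix id h) = V.submatrix id h * diagonal (Λ ∘ h) := by
  have hVVt : V * Vᵀ = 1 := mul_eq_one_comm.mp hVorth
  have hAV2 : A * V = V * diagonal Λ := by
    rw [hAV, Matrix.mul_assoc, Matrix.mul_assoc, hVorth, Matrix.mul_one]
  rw [mul_submatrix_left, hAV2, submatrix_mul_diag]

/-! ### kernel existence -/

lemma exists_mulVec_zero (N : Matrix (Fin k) (Fin (k+1)) ℝ) : ∃ c, c ≠ 0 ∧ N *ᵥ c = 0 := by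
  have hni : ¬ Function.Injective N.mulVecLin := by
    intro hinj
    have hle := LinearMap.finrank_le_finrank_of_injective hinj
    simp only [Module.finrank_pi, Fintype.card_fin] at hle
    omega
  rw [← LinearMap.ker_eq_bot] at hni
  obtain ⟨c, hc, hne⟩ := Submodule.exists_mem_ne_zero_of_ne_bot hni
  exact ⟨c, hne, hc⟩

/-! ### action bound on the complement of leading eigenvectors -/

lemma compl_bound (V : Matrix (Fin a) (Fin a) ℝ) (Λ : Fin a → ℝ) (hVorth : Vᵀ * V = 1)
    (A : Matrix (Fin a) (Fin a) ℝ) (hAV : A = V * Matrix.diagonal Λ * Vᵀ)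
    (f : Fin r → Fin a) (μ : ℝ)
    (hμ : ∀ j, j ∉ Set.range f → Λ j ^ 2 ≤ μ ^ 2)
    (x : Fin a → ℝ) (hx : (V.submatrix id f)ᵀ *ᵥ x = 0) :
    ∑ i, (A *ᵥ x) i ^ 2 ≤ μ ^ 2 * ∑ i, x i ^ 2 := by
  have hVVt : V * Vᵀ = 1 := mul_eq_one_comm.mp hVorth
  set c : Fin a → ℝ := Vᵀ *ᵥ x with hc
  have hxc : x = V *ᵥ c := by
    rw [hc, mulVec_mulVec, hVVt, one_mulVec]
  have hcf : ∀ q : Fin r, c (f q) = 0 := by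
    intro q
    have := congrFun hx q
    simpa [mulVec, dotProduct, hc, transpose_apply] using this
  have hAx : A *ᵥ x = V *ᵥ (fun j => Λ j * c j) := by
    rw [hAV, ← mulVec_mulVec, ← mulVec_mulVec, ← hc]
    have hd : (diagonal Λ *ᵥ c) = fun j => Λ j * c j := by
      ext j; simp [mulVec_diagonal]
    rw [hd]
  have e1 : ∑ i, (A *ᵥ x) i ^ 2 = ∑ j, (Λ j * c j) ^ 2 := by
    rw [hAx, sum_sq_mulVec_orth V hVorth]
  have e2 : ∑ i, x i ^ 2 = ∑ j, c j ^ 2 := by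
    rw [hxc, sum_sq_mulVec_orth V hVorth]
  rw [e1, e2, Finset.mul_sum]
  apply Finset.sum_le_sum
  intro j _
  by_cases hj : j ∈ Set.range f
  · obtain ⟨q, rfl⟩ := hj
    simp [hcf q]
  · have := hμ j hj
    rw [mul_pow]
    nlinarith [sq_nonneg (c j)]


/-! ### conjugation helpers -/

lemma conj_mul (W : Matrix (Fin k) (Fin k) ℝ) (hW : Wᵀ * W = 1) (p q : Fin k → ℝ) :
    (W * diagonal p * Wᵀ) * (W * diagonal q * Wᵀ)
      = W * diagonal (fun i => p i * q i) * Wᵀ := by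
  have h1 : (W * diagonal p * Wᵀ) * (W * diagonal q * Wᵀ)
      = W * diagonal p * (Wᵀ * W) * (diagonal q * Wᵀ) := by
    noncomm_ring
  rw [h1, hW, mul_one, show W * diagonal p * (diagonal q * Wᵀ)
    = W * (diagonal p * diagonal q) * Wᵀ by noncomm_ring, diagonal_mul_diagonal]

lemma conj_symm (W : Matrix (Fin k) (Fin k) ℝ) (p : Fin k → ℝ) :
    (W * diagonal p * Wᵀ)ᵀ = W * diagonal p * Wᵀ := by
  rw [transpose_mul, transpose_mul, transpose_transpose, diagonal_transpose]
  noncomm_ring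

lemma conj_trace (W : Matrix (Fin k) (Fin k) ℝ) (hW : Wᵀ * W = 1) (p : Fin k → ℝ) :
    (W * diagonal p * Wᵀ).trace = ∑ i, p i := by
  rw [Matrix.trace_mul_cycle, hW, Matrix.one_mul, Matrix.trace_diagonal]

/-! ### polar decomposition -/

lemma diag_congr (p q : Fin k → ℝ) (h : ∀ i, p i = q i) : diagonal p = diagonal q := by
  have : p = q := funext h
  rw [this]

lemma polar (B : Matrix (Fin k) (Fin k) ℝ)
    (hB : ∀ c : Fin k → ℝ, ∑ i, (B *ᵥ c) i ^ 2 ≤ ∑ i, c i ^ 2) :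
    ∃ Q : Matrix (Fin k) (Fin k) ℝ, Qᵀ * Q = 1 ∧ 0 ≤ (Qᵀ * B).trace ∧
      (Bᵀ * B).trace ≤ (Qᵀ * B).trace := by
  classical
  have hct : Bᴴ = Bᵀ := conjTranspose_eq_transpose_of_trivial B
  set G : Matrix (Fin k) (Fin k) ℝ := Bᵀ * B with hGdef
  have hGh : G.IsHermitian := by
    rw [hGdef, ← hct]; exact isHermitian_conjTranspose_mul_self B
  have hGpsd : G.PosSemidef := by
    rw [hGdef, ← hct]; exact posSemidef_conjTranspose_mul_self B
  set W : Matrix (Fin k) (Fin k) ℝ := (hGh.eigenvectorUnitary : Matrix (Fin k) (Fin k) ℝ)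
    with hWdef
  set ev : Fin k → ℝ := hGh.eigenvalues with hevdef
  have hWstar := Unitary.mem_iff.mp hGh.eigenvectorUnitary.2
  have hstarW : star W = Wᵀ := by
    rw [Matrix.star_eq_conjTranspose, conjTranspose_eq_transpose_of_trivial]
  have hWtW : Wᵀ * W = 1 := by rw [← hstarW]; exact hWstar.1
  have hWWt : W * Wᵀ = 1 := by rw [← hstarW]; exact hWstar.2
  have hspec : G = W * diagonal ev * Wᵀ := by
    have := hGh.spectral_theorem
    rwa [Unitary.conjStarAlgAut_apply, hstarW, show RCLike.ofReal ∘ hGh.eigenvalues = ev by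
      rw [RCLike.ofReal_real_eq_id]; rfl] at this
  have hev0 : ∀ i, 0 ≤ ev i := fun i => hGpsd.eigenvalues_nonneg i
  -- eigencolumn relation and the bound `ev ≤ 1`
  have hGW : G * W = W * diagonal ev := by
    rw [hspec, Matrix.mul_assoc, Matrix.mul_assoc, hWtW, Matrix.mul_one]
  have hcol : ∀ i, G *ᵥ (fun j => W j i) = fun j => W j i * ev i := by
    intro i
    have h := congrArg (fun M => M *ᵥ Pi.single i 1) hGW
    simp only [← mulVec_mulVec] at h
    rw [diagonal_mulVec_single] at h
    have h1 : W *ᵥ Pi.single i (1:ℝ) = fun j => W j i := by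
      ext j; simp [mulVec_single]
    have h2 : W *ᵥ Pi.single i (ev i * 1) = fun j => W j i * ev i := by
      ext j; simp [mulVec_single]
    rw [h1, h2] at h
    exact h
  have hnormw : ∀ i, ∑ j, W j i ^ 2 = 1 := by
    intro i
    have : (Wᵀ * W) i i = (1 : Matrix (Fin k) (Fin k) ℝ) i i := by rw [hWtW]
    simpa [mul_apply, transpose_apply, one_apply, sq] using this
  have hBcol : ∀ i, ∑ p, (B *ᵥ fun j => W j i) p ^ 2 = ev i := by
    intro i
    rw [sum_sq_mulVec, ← hGdef, hcol i]
    simp only [dotProduct]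
    have : ∑ j, W j i * (W j i * ev i) = (∑ j, W j i ^ 2) * ev i := by
      rw [Finset.sum_mul]; congr 1; ext j; ring
    rw [this, hnormw i, one_mul]
  have hev1 : ∀ i, ev i ≤ 1 := by
    intro i
    have h1 := hB (fun j => W j i)
    rw [hBcol i] at h1
    calc ev i ≤ ∑ j, W j i ^ 2 := h1
      _ = 1 := hnormw i
  -- the square root and partial isometry
  set ind : Fin k → ℝ := fun i => if ev i = 0 then 0 else 1 with hinddef
  set g : Fin k → ℝ := fun i => if ev i = 0 then 0 else (Real.sqrt (ev i))⁻¹ with hgdef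
  set S : Matrix (Fin k) (Fin k) ℝ := W * diagonal (fun i => Real.sqrt (ev i)) * Wᵀ with hSdef
  set Pim : Matrix (Fin k) (Fin k) ℝ := W * diagonal ind * Wᵀ with hPimdef
  set Tg : Matrix (Fin k) (Fin k) ℝ := W * diagonal g * Wᵀ with hTgdef
  set Q₀ : Matrix (Fin k) (Fin k) ℝ := B * Tg with hQ₀def
  have hgevg : ∀ i, (g i * ev i) * g i = ind i := by
    intro i
    by_cases h : ev i = 0
    · simp [hgdef, hinddef, h]
    · have hpos : 0 < ev i := lt_of_le_of_ne (hev0 i) (Ne.symm h)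
      have hs : Real.sqrt (ev i) ≠ 0 := (Real.sqrt_pos.mpr hpos).ne'
      simp only [hgdef, hinddef, if_neg h]
      rw [show (Real.sqrt (ev i))⁻¹ * ev i * (Real.sqrt (ev i))⁻¹
          = ev i / (Real.sqrt (ev i) * Real.sqrt (ev i)) by ring,
        Real.mul_self_sqrt (hev0 i)]
      exact div_self h
  have hQ₀tQ₀ : Q₀ᵀ * Q₀ = Pim := by
    have hTgt : Tgᵀ = Tg := conj_symm W g
    have h0 : Q₀ᵀ * Q₀ = Tg * G * Tg := by
      rw [hQ₀def, transpose_mul, hTgt, hGdef]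
      noncomm_ring
    rw [h0, hspec, hTgdef, conj_mul W hWtW, conj_mul W hWtW, hPimdef]
    rw [diag_congr _ _ (fun i => hgevg i)]
  -- `Q₀ * S = B`
  have hPimS : Pim * S = S := by
    rw [hPimdef, hSdef, conj_mul W hWtW]
    rw [diag_congr (fun i => ind i * Real.sqrt (ev i)) (fun i => Real.sqrt (ev i)) (by
      intro i
      by_cases h : ev i = 0 <;> simp [hinddef, h])]
  have hPimPim : Pim * Pim = Pim := by
    rw [hPimdef, conj_mul W hWtW]
    rw [diag_congr (fun i => ind i * ind i) ind (by
      intro i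
      by_cases h : ev i = 0 <;> simp [hinddef, h])]
  have hBW0 : B * W * diagonal (fun i => 1 - ind i) = 0 := by
    ext p i
    rw [mul_diagonal]
    by_cases h : ev i = 0
    · have hz : (B *ᵥ fun j => W j i) p = 0 := by
        have hsum : ∑ q, (B *ᵥ fun j => W j i) q ^ 2 = 0 := by rw [hBcol i, h]
        have := (Finset.sum_eq_zero_iff_of_nonneg
          (fun q _ => sq_nonneg ((B *ᵥ fun j => W j i) q))).mp hsum p (Finset.mem_univ p)
        exact pow_eq_zero_iff (two_ne_zero) |>.mp this
      have hBW : (B * W) p i = (B *ᵥ fun j => W j i) p := by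
        simp [mul_apply, mulVec, dotProduct]
      rw [hBW, hz]
      simp
    · simp [hinddef, h]
  have hone : W * diagonal (fun _ => (1:ℝ)) * Wᵀ = 1 := by
    rw [show diagonal (fun _ => (1:ℝ)) = (1 : Matrix (Fin k) (Fin k) ℝ) from diagonal_one,
      Matrix.mul_one, hWWt]
  have h1m : W * diagonal (fun i => 1 - ind i) * Wᵀ = 1 - Pim := by
    have hd : diagonal (fun i => 1 - ind i)
        = diagonal (fun _ => (1:ℝ)) - diagonal ind := by
      rw [diagonal_sub]
    rw [hd, Matrix.mul_sub, Matrix.sub_mul, hone, ← hPimdef]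
  have hBPim : B * Pim = B := by
    have h2 : B * (1 - Pim) = 0 := by
      rw [← h1m, ← Matrix.mul_assoc, ← Matrix.mul_assoc, hBW0, Matrix.zero_mul]
    rw [Matrix.mul_sub, Matrix.mul_one, sub_eq_zero] at h2
    exact h2.symm
  have hQ₀S : Q₀ * S = B := by
    have hTgS : Tg * S = Pim := by
      rw [hTgdef, hSdef, conj_mul W hWtW, hPimdef]
      rw [diag_congr (fun i => g i * Real.sqrt (ev i)) ind (by
        intro i
        by_cases h : ev i = 0
        · simp [hgdef, hinddef, h]
        · have hpos : 0 < ev i := lt_of_le_of_ne (hev0 i) (Ne.symm h)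
          have hs : Real.sqrt (ev i) ≠ 0 := (Real.sqrt_pos.mpr hpos).ne'
          simp [hgdef, hinddef, h, inv_mul_cancel₀ hs])]
    rw [hQ₀def, Matrix.mul_assoc, hTgS, hBPim]
  -- extend the partial isometry `Q₀` to an orthogonal matrix
  set R : Submodule ℝ (EuclideanSpace ℝ (Fin k)) :=
    LinearMap.range (Matrix.toEuclideanLin Pim) with hRdef
  have hmemR : ∀ v : EuclideanSpace ℝ (Fin k), v ∈ R →
      Pim *ᵥ (WithLp.equiv 2 (Fin k → ℝ) v) = WithLp.equiv 2 (Fin k → ℝ) v := by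
    intro v hv
    obtain ⟨u, hu⟩ := hv
    have h0 : WithLp.equiv 2 (Fin k → ℝ) v
        = Pim *ᵥ (WithLp.equiv 2 (Fin k → ℝ) u) := by
      rw [← hu]; rfl
    rw [h0, mulVec_mulVec, hPimPim]
  have hnorm : ∀ v : EuclideanSpace ℝ (Fin k), v ∈ R →
      ‖Matrix.toEuclideanLin Q₀ v‖ = ‖v‖ := by
    intro v hv
    set v' := WithLp.equiv 2 (Fin k → ℝ) v with hv'
    have h1 : ‖Matrix.toEuclideanLin Q₀ v‖ = Real.sqrt (∑ i, (Q₀ *ᵥ v') i ^ 2) := by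
      rw [Matrix.toEuclideanLin_apply]; exact norm_piLp_symm _
    have h2 : ‖v‖ = Real.sqrt (∑ i, v' i ^ 2) := by
      rw [show v = (WithLp.equiv 2 (Fin k → ℝ)).symm v' from rfl, norm_piLp_symm]
    rw [h1, h2]
    congr 1
    rw [sum_sq_mulVec, hQ₀tQ₀, hmemR v hv, sum_sq_eq_dot]
  set L : R →ₗᵢ[ℝ] EuclideanSpace ℝ (Fin k) :=
    { toLinearMap := (Matrix.toEuclideanLin Q₀).comp R.subtype
      norm_map' := fun x => by simpa using hnorm x x.2 } with hLdef
  set Le := L.extend with hLedef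
  set Q : Matrix (Fin k) (Fin k) ℝ := Matrix.toEuclideanLin.symm Le.toLinearMap with hQdef
  have hQeu : Matrix.toEuclideanLin Q = Le.toLinearMap := by
    rw [hQdef]; exact Matrix.toEuclideanLin.apply_symm_apply _
  have hQapp : ∀ x : Fin k → ℝ,
      Q *ᵥ x = WithLp.equiv 2 (Fin k → ℝ) (Le ((WithLp.equiv 2 (Fin k → ℝ)).symm x)) := by
    intro x
    calc Q *ᵥ x
        = WithLp.equiv 2 (Fin k → ℝ) ((WithLp.equiv 2 (Fin k → ℝ)).symm (Q *ᵥ x)) :=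
          (Equiv.apply_symm_apply _ _).symm
      _ = WithLp.equiv 2 (Fin k → ℝ)
            (Matrix.toEuclideanLin Q ((WithLp.equiv 2 (Fin k → ℝ)).symm x)) := by
          rfl
      _ = WithLp.equiv 2 (Fin k → ℝ) (Le ((WithLp.equiv 2 (Fin k → ℝ)).symm x)) := by
          rw [hQeu]; rfl
  have horth : Qᵀ * Q = 1 := by
    ext i j
    have h := Le.inner_map_map ((WithLp.equiv 2 (Fin k → ℝ)).symm (Pi.single i 1))
      ((WithLp.equiv 2 (Fin k → ℝ)).symm (Pi.single j 1))
    have hcolQ : ∀ (i : Fin k) (p : Fin k),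
        (Le ((WithLp.equiv 2 (Fin k → ℝ)).symm (Pi.single i 1))) p = Q p i := by
      intro i p
      have := congrFun (hQapp (Pi.single i 1)) p
      simp only [mulVec_single, mul_one] at this
      refine this.symm.trans ?_; simp
    rw [PiLp.inner_apply, PiLp.inner_apply] at h
    simp only [RCLike.inner_apply, conj_trivial] at h
    simp only [hcolQ] at h
    have hrhs : ∑ p, (Pi.single i (1:ℝ)) p * (Pi.single j (1:ℝ)) p
        = (1 : Matrix (Fin k) (Fin k) ℝ) i j := by
      by_cases hij : i = j
      · subst hij; simp [Pi.single_apply]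
      · simp [Pi.single_apply, one_apply, hij]
        intro hcon
        exact hij hcon.symm
    rw [mul_apply]
    simp only [transpose_apply]
    rw [← hrhs]
    convert h using 2
    all_goals exact mul_comm _ _
  have hQS : Q * S = B := by
    apply ext_mulVec
    intro x
    have hySmem : (WithLp.equiv 2 (Fin k → ℝ)).symm (S *ᵥ x) ∈ R := by
      refine ⟨(WithLp.equiv 2 (Fin k → ℝ)).symm (S *ᵥ x), ?_⟩
      show WithLp.toLp 2 (Pim *ᵥ (S *ᵥ x)) = WithLp.toLp 2 (S *ᵥ x)
      congr 1
      rw [mulVec_mulVec, hPimS]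
    have hLeQ₀ : Le ((WithLp.equiv 2 (Fin k → ℝ)).symm (S *ᵥ x))
        = Matrix.toEuclideanLin Q₀ ((WithLp.equiv 2 (Fin k → ℝ)).symm (S *ᵥ x)) := by
      have hext := L.extend_apply ⟨_, hySmem⟩
      rw [hLedef]
      exact hext
    calc (Q * S) *ᵥ x = Q *ᵥ (S *ᵥ x) := by rw [← mulVec_mulVec]
      _ = WithLp.equiv 2 (Fin k → ℝ) (Le ((WithLp.equiv 2 (Fin k → ℝ)).symm (S *ᵥ x))) :=
          hQapp _
      _ = WithLp.equiv 2 (Fin k → ℝ)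
            (Matrix.toEuclideanLin Q₀ ((WithLp.equiv 2 (Fin k → ℝ)).symm (S *ᵥ x))) := by
          rw [hLeQ₀]
      _ = Q₀ *ᵥ (S *ᵥ x) := by
          change WithLp.equiv 2 (Fin k → ℝ) ((WithLp.equiv 2 (Fin k → ℝ)).symm (Q₀ *ᵥ (S *ᵥ x))) = _
          exact Equiv.apply_symm_apply _ _
      _ = B *ᵥ x := by rw [mulVec_mulVec, hQ₀S]
  refine ⟨Q, horth, ?_, ?_⟩
  all_goals
    have hQtB : Qᵀ * B = S := by
      rw [← hQS, ← Matrix.mul_assoc, horth, Matrix.one_mul]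
    have htrS : S.trace = ∑ i, Real.sqrt (ev i) := by
      rw [hSdef]; exact conj_trace W hWtW _
    have htrG : (Bᵀ * B).trace = ∑ i, ev i := by
      rw [← hGdef, hspec]; exact conj_trace W hWtW _
  · rw [hQtB, htrS]
    exact Finset.sum_nonneg fun i _ => Real.sqrt_nonneg _
  · rw [hQtB, htrS, htrG]
    apply Finset.sum_le_sum
    intro i _
    have hs1 : Real.sqrt (ev i) ≤ 1 := by
      rw [show (1:ℝ) = Real.sqrt 1 by simp]
      exact Real.sqrt_le_sqrt (hev1 i)
    calc ev i = Real.sqrt (ev i) * Real.sqrt (ev i) := (Real.mul_self_sqrt (hev0 i)).symm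
      _ ≤ 1 * Real.sqrt (ev i) := mul_le_mul_of_nonneg_right hs1 (Real.sqrt_nonneg _)
      _ = Real.sqrt (ev i) := one_mul _


/-! ### the complementary eigenvalue bound -/

lemma mu_le {n K : ℕ}
    (P A : Matrix (Fin n) (Fin n) ℝ)
    (U : Matrix (Fin n) (Fin K) ℝ) (D : Matrix (Fin K) (Fin K) ℝ)
    (hP : P = U * D * Uᵀ)
    (V : Matrix (Fin n) (Fin n) ℝ) (Λ : Fin n → ℝ)
    (hVorth : Vᵀ * V = 1) (hAV : A = V * Matrix.diagonal Λ * Vᵀ)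
    (f : Fin K → Fin n) (hf : Function.Injective f)
    (hleading : ∀ (k : Fin K) (j : Fin n), j ∉ Set.range f → |Λ j| ≤ |Λ (f k)|)
    (j₀ : Fin n) (hj₀ : j₀ ∉ Set.range f) :
    |Λ j₀| ≤ specNorm (A - P) := by
  classical
  set f' : Fin (K+1) → Fin n := fun i => if h : (i : ℕ) < K then f ⟨i, h⟩ else j₀ with hf'def
  have hf'inj : Function.Injective f' := by
    intro p q hpq
    by_cases hp : (p:ℕ) < K <;> by_cases hq : (q:ℕ) < K
    · simp only [hf'def, dif_pos hp, dif_pos hq] at hpq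
      have := congrArg Fin.val (hf hpq)
      exact Fin.ext (by simpa using this)
    · exfalso
      simp only [hf'def, dif_pos hp, dif_neg hq] at hpq
      exact hj₀ ⟨_, hpq⟩
    · exfalso
      simp only [hf'def, dif_neg hp, dif_pos hq] at hpq
      exact hj₀ ⟨_, hpq.symm⟩
    · have h1 : (p:ℕ) = K := by omega
      have h2 : (q:ℕ) = K := by omega
      exact Fin.ext (by omega)
  set C := V.submatrix id f' with hCdef
  have hCorth : Cᵀ * C = 1 := orth_submatrix V hVorth f' hf'inj
  obtain ⟨c, hc0, hcK⟩ := exists_mulVec_zero (Uᵀ * C)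
  set x := C *ᵥ c with hxdef
  have hsumx : ∑ i, x i ^ 2 = ∑ i, c i ^ 2 := sum_sq_mulVec_orth C hCorth c
  have hxpos : 0 < ∑ i, x i ^ 2 := by
    rw [hsumx]
    obtain ⟨i0, hi0⟩ : ∃ i, c i ≠ 0 := by
      by_contra hcon
      push_neg at hcon
      exact hc0 (funext hcon)
    exact Finset.sum_pos' (fun i _ => sq_nonneg _) ⟨i0, Finset.mem_univ _, by positivity⟩
  have hUx : Uᵀ *ᵥ x = 0 := by
    rw [hxdef, mulVec_mulVec, hcK]
  have hPx : P *ᵥ x = 0 := by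
    rw [hP, ← mulVec_mulVec, hUx, mulVec_zero]
  have hApx : (A - P) *ᵥ x = A *ᵥ x := by rw [sub_mulVec, hPx, sub_zero]
  have hAx : A *ᵥ x = C *ᵥ (fun i => Λ (f' i) * c i) := by
    have hAC : A * C = C * diagonal (Λ ∘ f') := eig_cols A V Λ hVorth hAV f'
    rw [hxdef, mulVec_mulVec, hAC, ← mulVec_mulVec]
    have hd : (diagonal (Λ ∘ f') *ᵥ c) = fun i => Λ (f' i) * c i := by
      ext i; simp [mulVec_diagonal]
    rw [hd]
  have hsumAx : ∑ i, ((A - P) *ᵥ x) i ^ 2 = ∑ i, (Λ (f' i) * c i) ^ 2 := by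
    rw [hApx, hAx, sum_sq_mulVec_orth C hCorth]
  apply le_specNorm_of (A - P) x _ (abs_nonneg _) hxpos
  rw [hsumAx, hsumx, Finset.mul_sum]
  apply Finset.sum_le_sum
  intro i _
  have hle : |Λ j₀| ≤ |Λ (f' i)| := by
    by_cases h : (i:ℕ) < K
    · simpa [hf'def, dif_pos h] using hleading ⟨i, h⟩ j₀ hj₀
    · simp [hf'def, dif_neg h]
  calc |Λ j₀| ^ 2 * c i ^ 2 ≤ |Λ (f' i)| ^ 2 * c i ^ 2 :=
        mul_le_mul_of_nonneg_right (pow_le_pow_left₀ (abs_nonneg _) hle 2) (sq_nonneg _)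
    _ = (Λ (f' i) * c i) ^ 2 := by rw [mul_pow, sq_abs]

end Stmt6Aux

set_option maxHeartbeats 1600000

open Stmt6Aux

/-- Principal subspace perturbation bound. -/
theorem stmt6 (n K : ℕ) (γ : ℝ) (hγ : 0 < γ)
    (P A : Matrix (Fin n) (Fin n) ℝ) (hAsymm : A.IsSymm) (hPsymm : P.IsSymm)
    -- rank-K eigendecomposition of P with all nonzero eigenvalues ≥ γ in absolute value
    (U : Matrix (Fin n) (Fin K) ℝ) (D : Matrix (Fin K) (Fin K) ℝ)
    (hUorth : Uᵀ * U = 1)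
    (hDdiag : ∀ k l, k ≠ l → D k l = 0)
    (hDγ : ∀ k, γ ≤ |D k k|)
    (hP : P = U * D * Uᵀ)
    -- full orthogonal eigendecomposition of A
    (V : Matrix (Fin n) (Fin n) ℝ) (Λ : Fin n → ℝ)
    (hVorth : Vᵀ * V = 1)
    (hAV : A = V * Matrix.diagonal Λ * Vᵀ)
    -- Û consists of the K leading eigenvectors of A (largest absolute eigenvalues)
    (f : Fin K → Fin n) (hf : Function.Injective f)
    (hleading : ∀ (k : Fin K) (j : Fin n), j ∉ Set.range f → |Λ j| ≤ |Λ (f k)|)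
    (Uhat : Matrix (Fin n) (Fin K) ℝ) (hUhat : Uhat = V.submatrix id f) :
    ∃ Q : Matrix (Fin K) (Fin K) ℝ, Qᵀ * Q = 1 ∧
      frobNorm (Uhat - U * Q) ≤ (2 * Real.sqrt (2 * K) / γ) * specNorm (A - P) := by
  classical
  have hε0 : 0 ≤ specNorm (A - P) := specNorm_nonneg _
  set ε := specNorm (A - P) with hεdef
  have hUhatorth : Uhatᵀ * Uhat = 1 := by
    rw [hUhat]; exact orth_submatrix V hVorth f hf
  have hBcontract : ∀ c : Fin K → ℝ, ∑ i, ((Uᵀ * Uhat) *ᵥ c) i ^ 2 ≤ ∑ i, c i ^ 2 := by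
    intro c
    rw [← mulVec_mulVec]
    calc ∑ i, (Uᵀ *ᵥ (Uhat *ᵥ c)) i ^ 2 ≤ ∑ i, (Uhat *ᵥ c) i ^ 2 :=
        sum_sq_transpose_le U hUorth _
      _ = ∑ i, c i ^ 2 := sum_sq_mulVec_orth Uhat hUhatorth c
  obtain ⟨Q, hQorth, htr0, htrG⟩ := polar (Uᵀ * Uhat) hBcontract
  refine ⟨Q, hQorth, ?_⟩
  -- trace computations
  have htraceK : (Uhatᵀ * Uhat).trace = (K:ℝ) := by
    rw [hUhatorth, Matrix.trace_one]; simp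
  have htrQQ : (Qᵀ * Q).trace = (K:ℝ) := by
    rw [hQorth, Matrix.trace_one]; simp
  have key1 : fr2 (Uhat - U * Q) = 2*(K:ℝ) - 2*(Qᵀ * (Uᵀ * Uhat)).trace := by
    rw [fr2_eq_trace]
    have hTT : (Uhat - U * Q)ᵀ * (Uhat - U * Q)
        = Uhatᵀ * Uhat - Uhatᵀ * (U * Q) - Qᵀ * (Uᵀ * Uhat) + Qᵀ * (Uᵀ * U) * Q := by
      rw [transpose_sub, transpose_mul, Matrix.sub_mul, Matrix.mul_sub, Matrix.mul_sub,
        Matrix.mul_assoc Qᵀ Uᵀ Uhat, Matrix.mul_assoc Qᵀ Uᵀ (U * Q),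
        ← Matrix.mul_assoc Uᵀ U Q, ← Matrix.mul_assoc Qᵀ (Uᵀ * U) Q]
      abel
    have h1 : (Uhatᵀ * (U * Q)).trace = (Qᵀ * (Uᵀ * Uhat)).trace := by
      rw [← Matrix.trace_transpose (Qᵀ * (Uᵀ * Uhat))]
      congr 1
      rw [transpose_mul, transpose_mul, transpose_transpose, transpose_transpose]
      rw [Matrix.mul_assoc]
    have h2 : (Qᵀ * (Uᵀ * U) * Q).trace = (K:ℝ) := by
      rw [hUorth, Matrix.mul_one, htrQQ]
    rw [hTT, Matrix.trace_add, Matrix.trace_sub, Matrix.trace_sub, htraceK, h1, h2]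
    ring
  set M : Matrix (Fin n) (Fin K) ℝ := U - Uhat * (Uhatᵀ * U) with hMdef
  have key2 : fr2 M = (K:ℝ) - ((Uᵀ * Uhat)ᵀ * (Uᵀ * Uhat)).trace := by
    have hMt : Mᵀ = Uᵀ - (Uᵀ * Uhat) * Uhatᵀ := by
      rw [hMdef, transpose_sub, transpose_mul, transpose_mul, transpose_transpose,
        Matrix.mul_assoc]
    have hMTM : Mᵀ * M = 1 - (Uᵀ * Uhat) * (Uhatᵀ * U) := by
      rw [hMt, hMdef, Matrix.sub_mul, Matrix.mul_sub, Matrix.mul_sub,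
        ← Matrix.mul_assoc Uᵀ Uhat (Uhatᵀ * U),
        Matrix.mul_assoc (Uᵀ * Uhat) Uhatᵀ U,
        Matrix.mul_assoc (Uᵀ * Uhat) Uhatᵀ (Uhat * (Uhatᵀ * U)),
        ← Matrix.mul_assoc Uhatᵀ Uhat (Uhatᵀ * U), hUhatorth, Matrix.one_mul, hUorth]
      abel
    have hXt : (Uᵀ * Uhat)ᵀ = Uhatᵀ * U := by
      rw [transpose_mul, transpose_transpose]
    rw [fr2_eq_trace, hMTM, Matrix.trace_sub, Matrix.trace_one, hXt,
      Matrix.trace_mul_comm]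
    simp
  have key3 : fr2 (Uhat - U * Q) ≤ 2 * fr2 M := by
    rw [key1, key2]
    linarith [htrG]
  by_cases hcase : γ ≤ 2 * ε
  · -- trivial case: the perturbation is large
    have hfr2K : fr2 (Uhat - U * Q) ≤ 2*(K:ℝ) := by rw [key1]; linarith
    have hεpos : 0 < ε := by linarith
    calc frobNorm (Uhat - U * Q) = Real.sqrt (fr2 (Uhat - U * Q)) := rfl
      _ ≤ Real.sqrt (2*(K:ℝ)) := Real.sqrt_le_sqrt hfr2K
      _ ≤ 2 * Real.sqrt (2 * (K:ℝ)) / γ * ε := by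
          rw [div_mul_eq_mul_div, le_div_iff₀ hγ]
          nlinarith [Real.sqrt_nonneg (2*(K:ℝ))]
  · -- Davis–Kahan case
    push_neg at hcase
    -- the complementary eigenvalue bound
    obtain ⟨μ, hμ0, hμε, hμb⟩ : ∃ μ:ℝ, 0 ≤ μ ∧ μ ≤ ε ∧
        ∀ j, j ∉ Set.range f → Λ j ^ 2 ≤ μ ^ 2 := by
      by_cases hex : ∃ j : Fin n, j ∉ Set.range f
      · obtain ⟨j1, hj1⟩ := hex
        obtain ⟨j₀, hj₀mem, hmax⟩ := Finset.exists_max_image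
          (Finset.univ.filter (fun j => j ∉ Set.range f)) (fun j => |Λ j|)
          ⟨j1, by simpa using hj1⟩
        have hj₀ : j₀ ∉ Set.range f := by simpa using hj₀mem
        refine ⟨|Λ j₀|, abs_nonneg _,
          mu_le P A U D hP V Λ hVorth hAV f hf hleading j₀ hj₀, ?_⟩
        intro j hj
        have hle := hmax j (by simpa using hj)
        calc Λ j ^ 2 = |Λ j| ^ 2 := (sq_abs _).symm
          _ ≤ |Λ j₀| ^ 2 := pow_le_pow_left₀ (abs_nonneg _) hle 2
      · push_neg at hex
        exact ⟨0, le_refl _, hε0, fun j hj => absurd (hex j) hj⟩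
    -- structural identities
    have hMeq : M = (1 - Uhat * Uhatᵀ) * U := by
      rw [hMdef, Matrix.sub_mul, Matrix.one_mul, Matrix.mul_assoc]
    have hUhatM : Uhatᵀ * M = 0 := by
      rw [hMdef, Matrix.mul_sub, ← Matrix.mul_assoc, hUhatorth, Matrix.one_mul, sub_self]
    have hPU : P * U = U * D := by
      rw [hP, Matrix.mul_assoc, hUorth, Matrix.mul_one]
    have hAUhat : A * Uhat = Uhat * diagonal (Λ ∘ f) := by
      rw [hUhat]; exact eig_cols A V Λ hVorth hAV f
    have hprojsymm : (Uhat * Uhatᵀ)ᵀ = Uhat * Uhatᵀ := by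
      rw [transpose_mul, transpose_transpose]
    have hcomm : (1 - Uhat * Uhatᵀ) * A = A * (1 - Uhat * Uhatᵀ) := by
      have hAs : Aᵀ = A := hAsymm
      have h1 : A * (Uhat * Uhatᵀ) = Uhat * diagonal (Λ ∘ f) * Uhatᵀ := by
        rw [← Matrix.mul_assoc, hAUhat]
      have h2 : (Uhat * Uhatᵀ) * A = Uhat * diagonal (Λ ∘ f) * Uhatᵀ := by
        calc (Uhat * Uhatᵀ) * A = ((Uhat * Uhatᵀ) * A)ᵀᵀ := (transpose_transpose _).symm
          _ = (Aᵀ * (Uhat * Uhatᵀ)ᵀ)ᵀ := by rw [transpose_mul]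
          _ = (A * (Uhat * Uhatᵀ))ᵀ := by rw [hAs, hprojsymm]
          _ = (Uhat * diagonal (Λ ∘ f) * Uhatᵀ)ᵀ := by rw [h1]
          _ = Uhat * diagonal (Λ ∘ f) * Uhatᵀ := by
              rw [transpose_mul, transpose_mul, transpose_transpose, diagonal_transpose,
                Matrix.mul_assoc]
      rw [Matrix.sub_mul, Matrix.mul_sub, Matrix.one_mul, Matrix.mul_one, h1, h2]
    have hMD : M * D = A * M - (1 - Uhat * Uhatᵀ) * ((A - P) * U) := by
      have e1 : M * D = (1 - Uhat * Uhatᵀ) * (P * U) := by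
        rw [hMeq, Matrix.mul_assoc, hPU]
      have e2 : (A - P) * U = A * U - P * U := Matrix.sub_mul _ _ _
      have e3 : (1 - Uhat * Uhatᵀ) * (A * U) = A * M := by
        rw [hMeq, ← Matrix.mul_assoc, hcomm, Matrix.mul_assoc]
      rw [e1, e2, Matrix.mul_sub (1 - Uhat * Uhatᵀ) (A * U) (P * U), e3]
      abel
    -- Frobenius-norm chain
    have i1 : γ * Real.sqrt (fr2 M) ≤ Real.sqrt (fr2 (M * D)) := by
      have hMDsum : ∀ i k', (M * D) i k' = M i k' * D k' k' := by
        intro i k'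
        rw [mul_apply]
        exact Finset.sum_eq_single k'
          (fun l _ hl => by rw [hDdiag l k' hl, mul_zero])
          (fun h => absurd (Finset.mem_univ _) h)
      have h1 : γ^2 * fr2 M ≤ fr2 (M * D) := by
        rw [fr2, fr2, Finset.mul_sum]
        apply Finset.sum_le_sum
        intro i _
        rw [Finset.mul_sum]
        apply Finset.sum_le_sum
        intro k' _
        rw [hMDsum i k', mul_pow]
        have hd2 : γ^2 ≤ D k' k'^2 := by
          have h := hDγ k'
          calc γ^2 ≤ |D k' k'|^2 := pow_le_pow_left₀ hγ.le h 2
            _ = D k' k'^2 := sq_abs _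
        nlinarith [sq_nonneg (M i k')]
      calc γ * Real.sqrt (fr2 M) = Real.sqrt (γ^2 * fr2 M) := by
            rw [Real.sqrt_mul (sq_nonneg γ), Real.sqrt_sq hγ.le]
        _ ≤ Real.sqrt (fr2 (M * D)) := Real.sqrt_le_sqrt h1
    have i2 : Real.sqrt (fr2 (M * D)) ≤ Real.sqrt (fr2 (A * M))
        + Real.sqrt (fr2 ((1 - Uhat * Uhatᵀ) * ((A - P) * U))) := by
      have hsum : M * D = A * M + -((1 - Uhat * Uhatᵀ) * ((A - P) * U)) := by
        rw [hMD]; abel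
      rw [hsum]
      calc Real.sqrt (fr2 (A * M + -((1 - Uhat * Uhatᵀ) * ((A - P) * U))))
          ≤ Real.sqrt (fr2 (A * M))
            + Real.sqrt (fr2 (-((1 - Uhat * Uhatᵀ) * ((A - P) * U)))) :=
            sqrt_fr2_triangle _ _
        _ = Real.sqrt (fr2 (A * M))
            + Real.sqrt (fr2 ((1 - Uhat * Uhatᵀ) * ((A - P) * U))) := by rw [fr2_neg]
    have i3 : Real.sqrt (fr2 (A * M)) ≤ ε * Real.sqrt (fr2 M) := by
      have h1 : fr2 (A * M) ≤ μ^2 * fr2 M := by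
        rw [fr2_col (A * M), fr2_col M, Finset.mul_sum]
        apply Finset.sum_le_sum
        intro k' _
        have hcol0' : Uhatᵀ *ᵥ (fun l => M l k') = 0 := by
          ext q
          have h0 : (Uhatᵀ * M) q k' = (0 : Matrix (Fin K) (Fin K) ℝ) q k' := by
            rw [hUhatM]
          rw [Matrix.zero_apply] at h0
          calc (Uhatᵀ *ᵥ fun l => M l k') q
              = (Uhatᵀ * M) q k' := by simp [mulVec, dotProduct, mul_apply]
            _ = 0 := h0
        have hcol0 : (V.submatrix id f)ᵀ *ᵥ (fun l => M l k') = 0 := by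
          rw [← hUhat]; exact hcol0'
        have hA := compl_bound V Λ hVorth A hAV f μ hμb (fun l => M l k') hcol0
        have hent : ∀ i, (A * M) i k' = (A *ᵥ fun l => M l k') i := by
          intro i; simp [mul_apply, mulVec, dotProduct]
        calc ∑ i, (A * M) i k'^2 = ∑ i, (A *ᵥ fun l => M l k') i ^2 := by
              apply Finset.sum_congr rfl
              intro i _
              rw [hent]
          _ ≤ μ^2 * ∑ i, M i k'^2 := hA
      have h2 : fr2 (A * M) ≤ ε^2 * fr2 M :=
        le_trans h1 (mul_le_mul_of_nonneg_right
          (pow_le_pow_left₀ hμ0 hμε 2) (fr2_nonneg M))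
      calc Real.sqrt (fr2 (A * M)) ≤ Real.sqrt (ε^2 * fr2 M) := Real.sqrt_le_sqrt h2
        _ = ε * Real.sqrt (fr2 M) := by
            rw [Real.sqrt_mul (sq_nonneg ε), Real.sqrt_sq hε0]
    have i4 : Real.sqrt (fr2 ((1 - Uhat * Uhatᵀ) * ((A - P) * U)))
        ≤ ε * Real.sqrt (K:ℝ) := by
      have hcolU : ∀ k', ∑ m, U m k'^2 = 1 := by
        intro k'
        have h : (Uᵀ * U) k' k' = (1 : Matrix (Fin K) (Fin K) ℝ) k' k' := by rw [hUorth]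
        simpa [mul_apply, transpose_apply, one_apply, sq] using h
      have h1 : fr2 ((1 - Uhat * Uhatᵀ) * ((A - P) * U)) ≤ ε^2 * (K:ℝ) := by
        set N : Matrix (Fin n) (Fin K) ℝ := (1 - Uhat * Uhatᵀ) * ((A - P) * U) with hNdef
        rw [fr2_col]
        have hcol : ∀ k', ∑ i, N i k' ^ 2 ≤ ε^2 := by
          intro k'
          have hent : ∀ i, N i k'
              = ((1 - Uhat * Uhatᵀ) *ᵥ fun l => ((A - P) * U) l k') i := by
            intro i; rw [hNdef]; simp [mul_apply, mulVec, dotProduct]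
          have hent2 : ∀ l, ((A - P) * U) l k' = ((A - P) *ᵥ fun m => U m k') l := by
            intro l; simp [mul_apply, mulVec, dotProduct]
          calc ∑ i, N i k' ^ 2
              = ∑ i, ((1 - Uhat * Uhatᵀ) *ᵥ fun l => ((A - P) * U) l k') i ^2 := by
                apply Finset.sum_congr rfl
                intro i _
                rw [hent]
            _ ≤ ∑ l, ((A - P) * U) l k'^2 := sum_sq_proj_le Uhat hUhatorth _
            _ = ∑ l, ((A - P) *ᵥ fun m => U m k') l ^2 := by
                apply Finset.sum_congr rfl
                intro l _
                rw [hent2]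
            _ ≤ specNorm (A - P)^2 * ∑ m, U m k'^2 := sum_sq_mulVec_le _ _
            _ = ε^2 := by rw [hcolU k', ← hεdef, mul_one]
        calc ∑ k', ∑ i, N i k' ^ 2 ≤ ∑ _k' : Fin K, ε^2 :=
              Finset.sum_le_sum (fun k' _ => hcol k')
          _ = ε^2 * (K:ℝ) := by
              rw [Finset.sum_const]
              simp [mul_comm]
      calc Real.sqrt (fr2 ((1 - Uhat * Uhatᵀ) * ((A - P) * U)))
          ≤ Real.sqrt (ε^2 * (K:ℝ)) := Real.sqrt_le_sqrt h1
        _ = ε * Real.sqrt (K:ℝ) := by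
            rw [Real.sqrt_mul (sq_nonneg ε), Real.sqrt_sq hε0]
    -- combine
    have hm : (γ - ε) * Real.sqrt (fr2 M) ≤ ε * Real.sqrt (K:ℝ) := by nlinarith [i1, i2, i3, i4]
    have hγm : γ * Real.sqrt (fr2 M) ≤ 2 * (ε * Real.sqrt (K:ℝ)) := by
      nlinarith [Real.sqrt_nonneg (fr2 M)]
    have hsqrt2K : Real.sqrt (2 * (K:ℝ)) = Real.sqrt 2 * Real.sqrt (K:ℝ) :=
      Real.sqrt_mul (by norm_num) _
    calc frobNorm (Uhat - U * Q) = Real.sqrt (fr2 (Uhat - U * Q)) := rfl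
      _ ≤ Real.sqrt (2 * fr2 M) := Real.sqrt_le_sqrt key3
      _ = Real.sqrt 2 * Real.sqrt (fr2 M) := Real.sqrt_mul (by norm_num) _
      _ ≤ 2 * Real.sqrt (2 * (K:ℝ)) / γ * ε := by
          rw [hsqrt2K, div_mul_eq_mul_div, le_div_iff₀ hγ]
          nlinarith [hγm, Real.sqrt_nonneg 2, Real.sqrt_nonneg (fr2 M),
            Real.sqrt_nonneg ((K:ℝ)), hε0]
end

section
/- Let Û, U ∈ ℝ^{n×K} each have orthonormal columns, with U spanning the rank-K column space of a symmetric matrix P whose smallest nonzero singular value is γ > 0, and Û spanning the K leading eigenvectors of a symmetric matrix A. If ‖A − P‖ ≤ γ/2 (spectral norm), then ‖(I − ÛÛ^T)UU^T‖ ≤ 2‖A − P‖/γ. -/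
open Matrix

lemma tel_mul {a b c : ℕ} (M : Matrix (Fin a) (Fin b) ℝ) (N : Matrix (Fin b) (Fin c) ℝ)
    (x : EuclideanSpace ℝ (Fin c)) :
    toEuclideanLin (M * N) x = toEuclideanLin M (toEuclideanLin N x) := by
  rw [toEuclideanLin_apply, toEuclideanLin_apply, toEuclideanLin_apply,
    WithLp.ofLp_toLp, mulVec_mulVec]

lemma specNorm_nonneg {n : ℕ} (M : Matrix (Fin n) (Fin n) ℝ) : 0 ≤ specNorm M :=
  norm_nonneg _

lemma spec_apply_le {n : ℕ} (M : Matrix (Fin n) (Fin n) ℝ) (x : EuclideanSpace ℝ (Fin n)) :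
    ‖toEuclideanLin M x‖ ≤ specNorm M * ‖x‖ := by
  have h := (LinearMap.toContinuousLinearMap (Matrix.toEuclideanLin M)).le_opNorm x
  simp only [LinearMap.coe_toContinuousLinearMap'] at h
  exact h

lemma spec_le {n : ℕ} (M : Matrix (Fin n) (Fin n) ℝ) (c : ℝ) (hc : 0 ≤ c)
    (h : ∀ x : EuclideanSpace ℝ (Fin n), ‖toEuclideanLin M x‖ ≤ c * ‖x‖) :
    specNorm M ≤ c := by
  apply ContinuousLinearMap.opNorm_le_bound _ hc
  intro x
  simp only [LinearMap.coe_toContinuousLinearMap']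
  exact h x

lemma enorm_sq {a : ℕ} (x : EuclideanSpace ℝ (Fin a)) : ‖x‖ ^ 2 = ∑ i, x i ^ 2 := by
  rw [EuclideanSpace.norm_eq, Real.sq_sqrt (by positivity)]
  simp [sq_abs]

lemma tel_inner {a b : ℕ} (M : Matrix (Fin a) (Fin b) ℝ) (x : EuclideanSpace ℝ (Fin b))
    (y : EuclideanSpace ℝ (Fin a)) :
    inner ℝ (toEuclideanLin M x) y = inner ℝ x (toEuclideanLin Mᵀ y) := by
  simp only [toEuclideanLin_apply, PiLp.inner_apply, RCLike.inner_apply, starRingEnd_apply,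
    star_trivial]
  rw [show (∑ i, y.ofLp i * (M *ᵥ x.ofLp) i) = y.ofLp ⬝ᵥ (M *ᵥ x.ofLp) from rfl]
  rw [show (∑ j, (Mᵀ *ᵥ y.ofLp) j * x.ofLp j) = (Mᵀ *ᵥ y.ofLp) ⬝ᵥ x.ofLp from rfl]
  rw [dotProduct_mulVec, mulVec_transpose]

lemma tel_one {a : ℕ} (x : EuclideanSpace ℝ (Fin a)) :
    toEuclideanLin (1 : Matrix (Fin a) (Fin a) ℝ) x = x := by
  rw [toEuclideanLin_apply, one_mulVec]

/-- Orthonormal columns preserve the norm. -/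
lemma orth_norm {a b : ℕ} (U : Matrix (Fin a) (Fin b) ℝ) (h : Uᵀ * U = 1)
    (x : EuclideanSpace ℝ (Fin b)) : ‖toEuclideanLin U x‖ = ‖x‖ := by
  have h1 : inner ℝ (toEuclideanLin U x) (toEuclideanLin U x) = inner ℝ x x := by
    rw [tel_inner, ← tel_mul, h, tel_one]
  have := congrArg Real.sqrt h1
  rwa [real_inner_self_eq_norm_sq, real_inner_self_eq_norm_sq,
    Real.sqrt_sq (norm_nonneg _), Real.sqrt_sq (norm_nonneg _)] at this

/-- Transpose of a matrix with orthonormal columns is a contraction. -/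
lemma orth_transpose_le {a b : ℕ} (U : Matrix (Fin a) (Fin b) ℝ) (h : Uᵀ * U = 1)
    (y : EuclideanSpace ℝ (Fin a)) : ‖toEuclideanLin Uᵀ y‖ ≤ ‖y‖ := by
  set z := toEuclideanLin Uᵀ y with hz
  have h1 : inner ℝ z z = inner ℝ (toEuclideanLin U z) y := by
    conv_lhs => rw [hz, tel_inner Uᵀ y z]
    rw [transpose_transpose, real_inner_comm]
  have h2 : ‖z‖ ^ 2 ≤ ‖z‖ * ‖y‖ := by
    rw [← real_inner_self_eq_norm_sq, h1]
    calc inner ℝ (toEuclideanLin U z) y ≤ ‖toEuclideanLin U z‖ * ‖y‖ :=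
          real_inner_le_norm _ _
      _ = ‖z‖ * ‖y‖ := by rw [orth_norm U h]
  rcases eq_or_lt_of_le (norm_nonneg z) with h0 | h0
  · rw [← h0]; exact norm_nonneg y
  · nlinarith [h2]

lemma tel_diagonal {a : ℕ} (d : Fin a → ℝ) (x : EuclideanSpace ℝ (Fin a)) (i : Fin a) :
    toEuclideanLin (diagonal d) x i = d i * x i := by
  rw [toEuclideanLin_apply]
  show (diagonal d *ᵥ (WithLp.equiv 2 (Fin a → ℝ)) x) i = _
  rw [mulVec_diagonal]
  rfl

lemma diag_le {a : ℕ} (d : Fin a → ℝ) (c : ℝ) (hc : 0 ≤ c) (h : ∀ i, |d i| ≤ c)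
    (x : EuclideanSpace ℝ (Fin a)) : ‖toEuclideanLin (diagonal d) x‖ ≤ c * ‖x‖ := by
  have hsq : ‖toEuclideanLin (diagonal d) x‖ ^ 2 ≤ (c * ‖x‖) ^ 2 := by
    rw [enorm_sq, mul_pow, enorm_sq, Finset.mul_sum]
    apply Finset.sum_le_sum
    intro i _
    rw [tel_diagonal, mul_pow]
    have : d i ^ 2 ≤ c ^ 2 := by
      rw [← sq_abs (d i)]
      exact pow_le_pow_left₀ (abs_nonneg _) (h i) 2
    nlinarith [sq_nonneg (x i)]
  have := Real.sqrt_le_sqrt hsq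
  rwa [Real.sqrt_sq (norm_nonneg _), Real.sqrt_sq (by positivity)] at this

lemma diag_ge {a : ℕ} (d : Fin a → ℝ) (c : ℝ) (hc : 0 ≤ c) (h : ∀ i, c ≤ |d i|)
    (x : EuclideanSpace ℝ (Fin a)) : c * ‖x‖ ≤ ‖toEuclideanLin (diagonal d) x‖ := by
  have hsq : (c * ‖x‖) ^ 2 ≤ ‖toEuclideanLin (diagonal d) x‖ ^ 2 := by
    rw [enorm_sq, mul_pow, enorm_sq, Finset.mul_sum]
    apply Finset.sum_le_sum
    intro i _
    rw [tel_diagonal, mul_pow]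
    have : c ^ 2 ≤ d i ^ 2 := by
      rw [← sq_abs (d i)]
      exact pow_le_pow_left₀ hc (h i) 2
    nlinarith [sq_nonneg (x i)]
  have := Real.sqrt_le_sqrt hsq
  rwa [Real.sqrt_sq (norm_nonneg _), Real.sqrt_sq (by positivity)] at this

lemma mul_one_sel {a b m : ℕ} (M : Matrix (Fin a) (Fin b) ℝ) (g : Fin m → Fin b) :
    M * (1 : Matrix (Fin b) (Fin b) ℝ).submatrix id g = M.submatrix id g := by
  ext i l
  simp [mul_apply, one_apply]

lemma diag_sel {a m : ℕ} (Λ : Fin a → ℝ) (g : Fin m → Fin a) :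
    diagonal Λ * (1 : Matrix (Fin a) (Fin a) ℝ).submatrix id g
      = (1 : Matrix (Fin a) (Fin a) ℝ).submatrix id g * diagonal (Λ ∘ g) := by
  ext i k
  simp only [mul_apply, diagonal_apply, one_apply, submatrix_apply, id_eq, Function.comp_apply,
    ite_mul, mul_ite, one_mul, mul_one, zero_mul, mul_zero]
  rw [Finset.sum_ite_eq' Finset.univ (g k) fun x => if i = x then Λ i else 0,
      Finset.sum_ite_eq' Finset.univ k fun x => if i = g x then Λ (g x) else 0]
  simp only [Finset.mem_univ, if_true]
  by_cases h : i = g k <;> simp [h]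

lemma stepA (n K : ℕ) (P A : Matrix (Fin n) (Fin n) ℝ)
    (U : Matrix (Fin n) (Fin K) ℝ) (D : Matrix (Fin K) (Fin K) ℝ)
    (hUorth : Uᵀ * U = 1) (hP : P = U * D * Uᵀ)
    (V : Matrix (Fin n) (Fin n) ℝ) (Λ : Fin n → ℝ)
    (hVorth : Vᵀ * V = 1) (hAV : A = V * Matrix.diagonal Λ * Vᵀ)
    (f : Fin K → Fin n) (hf : Function.Injective f)
    (hleading : ∀ (k : Fin K) (j : Fin n), j ∉ Set.range f → |Λ j| ≤ |Λ (f k)|)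
    (j : Fin n) (hj : j ∉ Set.range f) :
    |Λ j| ≤ specNorm (A - P) := by
  set g : Fin (K + 1) → Fin n := Fin.snoc f j with hgdef
  have hgcs : ∀ k : Fin K, g k.castSucc = f k := by
    intro k; simp [hgdef]
  have hglast : g (Fin.last K) = j := by simp [hgdef]
  have hg : Function.Injective g := by
    intro a b hab
    induction a using Fin.lastCases with
    | last =>
      induction b using Fin.lastCases with
      | last => rfl
      | cast b =>
        rw [hglast, hgcs] at hab
        exact absurd ⟨b, hab.symm⟩ hj
    | cast a =>
      induction b using Fin.lastCases with
      | last =>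
        rw [hglast, hgcs] at hab
        exact absurd ⟨a, hab⟩ hj
      | cast b =>
        rw [hgcs, hgcs] at hab
        exact congrArg Fin.castSucc (hf hab)
  have hgj : ∀ k : Fin (K + 1), |Λ j| ≤ |Λ (g k)| := by
    intro k
    induction k using Fin.lastCases with
    | last => rw [hglast]
    | cast k => rw [hgcs]; exact hleading k j hj
  set W : Matrix (Fin n) (Fin (K + 1)) ℝ := V.submatrix id g with hWdef
  have hVV : Vᵀ * W = (1 : Matrix (Fin n) (Fin n) ℝ).submatrix id g := by
    have : (Vᵀ * V).submatrix id g = Vᵀ.submatrix id id * V.submatrix id g :=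
      submatrix_mul Vᵀ V id id g Function.bijective_id
    rw [submatrix_id_id] at this
    rw [hWdef, ← this, hVorth]
  have hWorth : Wᵀ * W = 1 := by
    rw [hWdef, transpose_submatrix]
    have : (Vᵀ * V).submatrix g g = Vᵀ.submatrix g id * V.submatrix id g :=
      submatrix_mul Vᵀ V g id g Function.bijective_id
    rw [← this, hVorth, submatrix_one g hg]
  have hAW : A * W = W * diagonal (Λ ∘ g) := by
    calc A * W = (V * diagonal Λ) * (Vᵀ * W) := by rw [hAV, Matrix.mul_assoc]
      _ = V * (diagonal Λ * (1 : Matrix (Fin n) (Fin n) ℝ).submatrix id g) := by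
          rw [hVV, Matrix.mul_assoc]
      _ = (V * (1 : Matrix (Fin n) (Fin n) ℝ).submatrix id g) * diagonal (Λ ∘ g) := by
          rw [diag_sel, Matrix.mul_assoc]
      _ = W * diagonal (Λ ∘ g) := by rw [mul_one_sel]
  -- nontrivial kernel
  have hnotinj : ¬ Function.Injective (Matrix.toEuclideanLin (Uᵀ * W)) := by
    intro hinj
    have hle := LinearMap.finrank_le_finrank_of_injective hinj
    rw [finrank_euclideanSpace_fin, finrank_euclideanSpace_fin] at hle
    omega
  rw [← LinearMap.ker_eq_bot] at hnotinj
  obtain ⟨c, hck, hc0⟩ := Submodule.ne_bot_iff _ |>.mp hnotinj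
  rw [LinearMap.mem_ker] at hck
  have hcn : 0 < ‖c‖ := norm_pos_iff.mpr hc0
  set w : EuclideanSpace ℝ (Fin n) := toEuclideanLin W c with hwdef
  have hwn : ‖w‖ = ‖c‖ := orth_norm W hWorth c
  have hPw : toEuclideanLin P w = 0 := by
    have h1 : toEuclideanLin Uᵀ w = 0 := by
      rw [hwdef, ← tel_mul]; exact hck
    rw [hP, Matrix.mul_assoc, tel_mul, tel_mul, h1, map_zero, map_zero]
  have hAw : toEuclideanLin A w = toEuclideanLin W (toEuclideanLin (diagonal (Λ ∘ g)) c) := by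
    rw [hwdef, ← tel_mul, hAW, tel_mul]
  have hlow : |Λ j| * ‖c‖ ≤ ‖toEuclideanLin A w‖ := by
    rw [hAw, orth_norm W hWorth]
    exact diag_ge (Λ ∘ g) (|Λ j|) (abs_nonneg _) hgj c
  have hup : ‖toEuclideanLin A w‖ ≤ specNorm (A - P) * ‖c‖ := by
    have heq : toEuclideanLin (A - P) w = toEuclideanLin A w := by
      rw [map_sub, LinearMap.sub_apply, hPw, sub_zero]
    rw [← heq, ← hwn]
    exact spec_apply_le _ _
  have := hlow.trans hup
  exact le_of_mul_le_mul_right this hcn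

lemma sel_mul_selT {a m : ℕ} (f : Fin m → Fin a) (hf : Function.Injective f)
    [DecidablePred (· ∈ Set.range f)] :
    (1 : Matrix (Fin a) (Fin a) ℝ).submatrix id f
        * ((1 : Matrix (Fin a) (Fin a) ℝ).submatrix id f)ᵀ
      = diagonal (fun i => if i ∈ Set.range f then (1 : ℝ) else 0) := by
  ext i i'
  simp only [mul_apply, submatrix_apply, transpose_apply, one_apply, id_eq, ite_mul, one_mul,
    zero_mul, mul_ite, mul_one, mul_zero, diagonal_apply]
  by_cases hii : i = i'
  · subst hii
    rw [if_pos rfl]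
    by_cases hmem : i ∈ Set.range f
    · obtain ⟨k0, hk0⟩ := hmem
      rw [if_pos ⟨k0, hk0⟩, Finset.sum_eq_single k0]
      · rw [if_pos hk0.symm, if_pos hk0.symm]
      · intro k _ hk
        rw [if_neg]
        intro h
        exact hk (hf (hk0.trans h).symm)
      · intro habs
        exact absurd (Finset.mem_univ k0) habs
    · rw [if_neg hmem, Finset.sum_eq_zero]
      intro k _
      rw [if_neg]
      intro h
      exact hmem ⟨k, h.symm⟩
  · rw [if_neg hii, Finset.sum_eq_zero]
    intro k _
    by_cases h1 : i = f k
    · rw [if_pos h1, if_neg]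
      intro h2
      exact hii (h1.trans h2.symm)
    · rw [if_neg h1, ite_self]

lemma conj_le {n : ℕ} (V : Matrix (Fin n) (Fin n) ℝ) (hVorth : Vᵀ * V = 1)
    (d : Fin n → ℝ) (c : ℝ) (hc : 0 ≤ c) (h : ∀ i, |d i| ≤ c)
    (x : EuclideanSpace ℝ (Fin n)) :
    ‖toEuclideanLin (V * diagonal d * Vᵀ) x‖ ≤ c * ‖x‖ := by
  have hVVt : V * Vᵀ = 1 := mul_eq_one_comm.mp hVorth
  have hVt : (Vᵀ)ᵀ * Vᵀ = 1 := by rw [transpose_transpose]; exact hVVt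
  rw [Matrix.mul_assoc, tel_mul, tel_mul, orth_norm V hVorth]
  calc ‖toEuclideanLin (diagonal d) (toEuclideanLin Vᵀ x)‖
      ≤ c * ‖toEuclideanLin Vᵀ x‖ := diag_le d c hc h _
    _ = c * ‖x‖ := by rw [orth_norm Vᵀ hVt]

lemma conjDiagMul {n : ℕ} (V : Matrix (Fin n) (Fin n) ℝ) (hVorth : Vᵀ * V = 1)
    (d e : Fin n → ℝ) :
    (V * diagonal d * Vᵀ) * (V * diagonal e * Vᵀ)
      = V * diagonal (fun i => d i * e i) * Vᵀ := by
  calc (V * diagonal d * Vᵀ) * (V * diagonal e * Vᵀ)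
      = V * diagonal d * ((Vᵀ * V) * (diagonal e * Vᵀ)) := by
        simp only [Matrix.mul_assoc]
    _ = V * (diagonal d * diagonal e) * Vᵀ := by
        rw [hVorth, Matrix.one_mul, ← Matrix.mul_assoc, Matrix.mul_assoc V]
    _ = V * diagonal (fun i => d i * e i) * Vᵀ := by
        rw [diagonal_mul_diagonal]

set_option maxHeartbeats 1000000 in
/-- Davis–Kahan step: projection distance bound under small perturbation. -/
theorem stmt7 (n K : ℕ) (γ : ℝ) (hγ : 0 < γ)
    (P A : Matrix (Fin n) (Fin n) ℝ) (hAsymm : A.IsSymm) (hPsymm : P.IsSymm)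
    -- rank-K eigendecomposition of P with all nonzero eigenvalues ≥ γ in absolute value
    (U : Matrix (Fin n) (Fin K) ℝ) (D : Matrix (Fin K) (Fin K) ℝ)
    (hUorth : Uᵀ * U = 1)
    (hDdiag : ∀ k l, k ≠ l → D k l = 0)
    (hDγ : ∀ k, γ ≤ |D k k|)
    (hP : P = U * D * Uᵀ)
    -- full orthogonal eigendecomposition of A
    (V : Matrix (Fin n) (Fin n) ℝ) (Λ : Fin n → ℝ)
    (hVorth : Vᵀ * V = 1)
    (hAV : A = V * Matrix.diagonal Λ * Vᵀ)
    -- Û consists of the K leading eigenvectors of A (largest absolute eigenvalues)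
    (f : Fin K → Fin n) (hf : Function.Injective f)
    (hleading : ∀ (k : Fin K) (j : Fin n), j ∉ Set.range f → |Λ j| ≤ |Λ (f k)|)
    (Uhat : Matrix (Fin n) (Fin K) ℝ) (hUhat : Uhat = V.submatrix id f)
    (hsmall : specNorm (A - P) ≤ γ / 2) :
    specNorm ((1 - Uhat * Uhatᵀ) * (U * Uᵀ)) ≤ 2 * specNorm (A - P) / γ := by
  classical
  set ε := specNorm (A - P) with hεdef
  have hε : 0 ≤ ε := specNorm_nonneg _
  have hVVt : V * Vᵀ = 1 := mul_eq_one_comm.mp hVorth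
  -- the projector Q = 1 - Û Ûᵀ as a conjugated diagonal
  set χ : Fin n → ℝ := fun i => if i ∈ Set.range f then 0 else 1 with hχdef
  have hQ : 1 - Uhat * Uhatᵀ = V * diagonal χ * Vᵀ := by
    have hJ : Uhat = V * (1 : Matrix (Fin n) (Fin n) ℝ).submatrix id f := by
      rw [hUhat, mul_one_sel]
    have h1 : Uhat * Uhatᵀ
        = V * diagonal (fun i => if i ∈ Set.range f then (1 : ℝ) else 0) * Vᵀ := by
      rw [hJ, transpose_mul]
      calc V * (1 : Matrix (Fin n) (Fin n) ℝ).submatrix id f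
            * (((1 : Matrix (Fin n) (Fin n) ℝ).submatrix id f)ᵀ * Vᵀ)
          = V * ((1 : Matrix (Fin n) (Fin n) ℝ).submatrix id f
              * ((1 : Matrix (Fin n) (Fin n) ℝ).submatrix id f)ᵀ) * Vᵀ := by
            simp only [Matrix.mul_assoc]
        _ = V * diagonal (fun i => if i ∈ Set.range f then (1 : ℝ) else 0) * Vᵀ := by
            rw [sel_mul_selT f hf]
    rw [h1]
    have h2 : (1 : Matrix (Fin n) (Fin n) ℝ) = V * diagonal (fun _ => (1 : ℝ)) * Vᵀ := by
      rw [diagonal_one, Matrix.mul_one, hVVt]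
    rw [h2]
    rw [← Matrix.sub_mul, ← Matrix.mul_sub]
    congr 2
    ext i j
    by_cases h : i = j
    · subst h
      by_cases hm : ∃ y, f y = i <;>
        simp [hχdef, Matrix.sub_apply, Set.mem_range, hm]
    · simp [Matrix.sub_apply, diagonal_apply_ne _ h, one_apply_ne h]
  -- eigenvalue bound for non-leading directions
  have hsA : ∀ j, |χ j * Λ j| ≤ ε := by
    intro j
    by_cases h : j ∈ Set.range f
    · rw [hχdef]; simpa [h] using hε
    · have := stepA n K P A U D hUorth hP V Λ hVorth hAV f hf hleading j h
      rw [hχdef]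
      simpa [h] using this
  -- Q * A as conjugated diagonal
  have hQA : (1 - Uhat * Uhatᵀ) * A = V * diagonal (fun i => χ i * Λ i) * Vᵀ := by
    rw [hQ, hAV, conjDiagMul V hVorth]
  -- pseudo-inverse of P on its column space
  set Dinv : Matrix (Fin K) (Fin K) ℝ := diagonal (fun k => (D k k)⁻¹) with hDinvdef
  have hDd : D = diagonal (fun k => D k k) := by
    ext k l
    by_cases h : k = l
    · rw [h, diagonal_apply_eq]
    · rw [diagonal_apply_ne _ h, hDdiag k l h]
  have hDne : ∀ k, D k k ≠ 0 := fun k => by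
    intro h0
    have := hDγ k
    rw [h0, abs_zero] at this
    linarith
  have hDDinv : D * Dinv = 1 := by
    have h3 : D * Dinv = diagonal (fun k => D k k * (D k k)⁻¹) := by
      conv_lhs => rw [hDinvdef]
      nth_rewrite 1 [hDd]
      rw [diagonal_mul_diagonal]
    have h4 : (fun k => D k k * (D k k)⁻¹) = fun _ => (1 : ℝ) :=
      funext fun k => mul_inv_cancel₀ (hDne k)
    rw [h3, h4, diagonal_one]
  set M : Matrix (Fin n) (Fin K) ℝ := U * Dinv with hMdef
  have hPi : U * Uᵀ = P * (M * Uᵀ) := by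
    rw [hP, hMdef]
    calc U * Uᵀ = U * (D * Dinv) * Uᵀ := by rw [hDDinv, Matrix.mul_one]
      _ = U * D * ((Uᵀ * U) * (Dinv * Uᵀ)) := by rw [hUorth]; simp only [Matrix.mul_assoc,
          Matrix.one_mul]
      _ = U * D * Uᵀ * (U * Dinv * Uᵀ) := by simp only [Matrix.mul_assoc]
  -- decompose Q * (U Uᵀ)
  have hdecomp : (1 - Uhat * Uhatᵀ) * (U * Uᵀ)
      = ((1 - Uhat * Uhatᵀ) * A) * (M * Uᵀ)
        - ((1 - Uhat * Uhatᵀ) * (A - P)) * (M * Uᵀ) := by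
    rw [← Matrix.sub_mul, ← Matrix.mul_sub, sub_sub_cancel, Matrix.mul_assoc, ← hPi]
  -- norm bound, pointwise
  have hMn : ∀ x : EuclideanSpace ℝ (Fin n),
      ‖toEuclideanLin (M * Uᵀ) x‖ ≤ γ⁻¹ * ‖x‖ := by
    intro x
    rw [tel_mul, hMdef, tel_mul, orth_norm U hUorth]
    calc ‖toEuclideanLin Dinv (toEuclideanLin Uᵀ x)‖
        ≤ γ⁻¹ * ‖toEuclideanLin Uᵀ x‖ := by
          apply diag_le _ _ (by positivity)
          intro k
          rw [abs_inv]
          exact inv_anti₀ hγ (hDγ k)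
      _ ≤ γ⁻¹ * ‖x‖ := by
          have := orth_transpose_le U hUorth x
          have h0 : (0:ℝ) ≤ γ⁻¹ := by positivity
          nlinarith
  apply spec_le _ _ (by positivity)
  intro x
  set y := toEuclideanLin (M * Uᵀ) x with hydef
  have hy : ‖y‖ ≤ γ⁻¹ * ‖x‖ := hMn x
  have hterm1 : ‖toEuclideanLin ((1 - Uhat * Uhatᵀ) * A) y‖ ≤ ε * ‖y‖ := by
    rw [hQA]
    exact conj_le V hVorth _ ε hε hsA y
  have hterm2 : ‖toEuclideanLin ((1 - Uhat * Uhatᵀ) * (A - P)) y‖ ≤ ε * ‖y‖ := by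
    rw [tel_mul]
    calc ‖toEuclideanLin (1 - Uhat * Uhatᵀ) (toEuclideanLin (A - P) y)‖
        ≤ 1 * ‖toEuclideanLin (A - P) y‖ := by
          rw [hQ]
          apply conj_le V hVorth _ 1 zero_le_one
          intro i
          rw [hχdef]
          by_cases h : i ∈ Set.range f <;> simp [h]
      _ ≤ ε * ‖y‖ := by
          rw [one_mul]
          exact spec_apply_le _ _
  have hsplit : ‖toEuclideanLin ((1 - Uhat * Uhatᵀ) * (U * Uᵀ)) x‖
      ≤ ε * ‖y‖ + ε * ‖y‖ := by
    rw [hdecomp, map_sub, LinearMap.sub_apply,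
      tel_mul ((1 - Uhat * Uhatᵀ) * A) (M * Uᵀ) x,
      tel_mul ((1 - Uhat * Uhatᵀ) * (A - P)) (M * Uᵀ) x, ← hydef]
    exact (norm_sub_le _ _).trans (add_le_add hterm1 hterm2)
  calc ‖toEuclideanLin ((1 - Uhat * Uhatᵀ) * (U * Uᵀ)) x‖
      ≤ ε * ‖y‖ + ε * ‖y‖ := hsplit
    _ ≤ 2 * ε / γ * ‖x‖ := by
        have hx : 0 ≤ ‖x‖ := norm_nonneg _
        have hyn : 0 ≤ ‖y‖ := norm_nonneg _
        have hyx : ‖y‖ * γ ≤ ‖x‖ := (le_div_iff₀ hγ).mp (by rwa [inv_mul_eq_div] at hy)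
        have h2e : (0:ℝ) ≤ 2 * ε := by positivity
        have := mul_le_mul_of_nonneg_left hyx h2e
        rw [div_mul_eq_mul_div, le_div_iff₀ hγ]
        nlinarith
end

section
/- In the setting of the approximate k-means error bound (U = ΘX, Ū = Θ̂X̂ a (1+ε)-approximate k-means solution for Û, δ_k ≤ min_{ℓ≠k}‖X_{ℓ*}−X_{k*}‖, S_k = {i ∈ G_k : ‖Ū_{i*}−U_{i*}‖ ≥ δ_k/2}), if additionally (16+8ε)‖Û − U‖_F²/δ_k² < n_k for all k, then there exists a K×K permutation matrix J such that Θ̂_{G*} = Θ_{G*}J, where G = ∪_{k=1}^K (G_k \ S_k). -/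
open Matrix

/-- The membership matrix associated with a community assignment `g`. -/
def memMat {n K : ℕ} (g : Fin n → Fin K) : Matrix (Fin n) (Fin K) ℝ :=
  Matrix.of fun i k => if g i = k then 1 else 0

/-- Squared Frobenius norm. -/
noncomputable def frobSq {n K : ℕ} (M : Matrix (Fin n) (Fin K) ℝ) : ℝ :=
  ∑ i, ∑ j, (M i j) ^ 2

lemma sqrt_tri {K : ℕ} (a b c : Fin K → ℝ) :
    Real.sqrt (∑ j, (a j - c j) ^ 2) ≤
      Real.sqrt (∑ j, (a j - b j) ^ 2) + Real.sqrt (∑ j, (b j - c j) ^ 2) := by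
  have h := dist_triangle (α := EuclideanSpace ℝ (Fin K)) (WithLp.toLp 2 a) (WithLp.toLp 2 b) (WithLp.toLp 2 c)
  simpa only [EuclideanSpace.dist_eq, Real.dist_eq, sq_abs, PiLp.toLp_apply] using h

lemma sqrt_symm {K : ℕ} (a b : Fin K → ℝ) :
    Real.sqrt (∑ j, (a j - b j) ^ 2) = Real.sqrt (∑ j, (b j - a j) ^ 2) := by
  congr 1
  exact Finset.sum_congr rfl fun j _ => by ring

/-- Approximate k-means error bound, second part: exact recovery
outside the sets S_k, up to a permutation of community labels. -/
theorem stmt10 (n K : ℕ) (ε : ℝ) (hε : 0 < ε)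
    (Uhat U : Matrix (Fin n) (Fin K) ℝ)
    (g : Fin n → Fin K) (X : Matrix (Fin K) (Fin K) ℝ)
    (hU : U = memMat g * X)
    (nk : Fin K → ℕ)
    (hnk : ∀ k, nk k = (Finset.univ.filter (fun i => g i = k)).card)
    (ghat : Fin n → Fin K) (Xhat : Matrix (Fin K) (Fin K) ℝ)
    (happrox : ∀ (g' : Fin n → Fin K) (X' : Matrix (Fin K) (Fin K) ℝ),
      frobSq (memMat ghat * Xhat - Uhat) ≤ (1 + ε) * frobSq (memMat g' * X' - Uhat))
    (Ubar : Matrix (Fin n) (Fin K) ℝ) (hUbar : Ubar = memMat ghat * Xhat)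
    (δ : Fin K → ℝ) (hδpos : ∀ k, 0 < δ k)
    (hδ : ∀ k l : Fin K, l ≠ k → δ k ≤ Real.sqrt (∑ j, (X l j - X k j) ^ 2))
    (S : Fin K → Finset (Fin n))
    (hS : ∀ k, S k = Finset.univ.filter
      (fun i => g i = k ∧ δ k / 2 ≤ Real.sqrt (∑ j, (Ubar i j - U i j) ^ 2)))
    (hcond : ∀ k, (16 + 8 * ε) * frobSq (Uhat - U) / δ k ^ 2 < (nk k : ℝ)) :
    ∃ σ : Equiv.Perm (Fin K), ∀ i : Fin n, i ∉ S (g i) → ghat i = σ (g i) := by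
  classical
  have hUrow : ∀ i j, U i j = X (g i) j := by
    intro i j
    simp [hU, memMat, Matrix.mul_apply]
  have hUbarrow : ∀ i j, Ubar i j = Xhat (ghat i) j := by
    intro i j
    simp [hUbar, memMat, Matrix.mul_apply]
  have hF0 : 0 ≤ frobSq (Uhat - U) := by
    apply Finset.sum_nonneg; intro i _
    apply Finset.sum_nonneg; intro j _
    positivity
  -- Step 1: frobSq (Ubar - Uhat) ≤ (1+ε) * frobSq (Uhat - U)
  have h1 : frobSq (Ubar - Uhat) ≤ (1 + ε) * frobSq (Uhat - U) := by
    have h := happrox g X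
    rw [← hU, ← hUbar] at h
    have hswap : frobSq (U - Uhat) = frobSq (Uhat - U) := by
      unfold frobSq
      exact Finset.sum_congr rfl fun i _ => Finset.sum_congr rfl fun j _ => by
        simp [Matrix.sub_apply]; ring
    rwa [hswap] at h
  -- Step 2: frobSq (Ubar - U) ≤ (4 + 2ε) frobSq (Uhat - U)
  have h2 : frobSq (Ubar - U) ≤ 2 * frobSq (Ubar - Uhat) + 2 * frobSq (Uhat - U) := by
    simp only [frobSq, Matrix.sub_apply, Finset.mul_sum, ← Finset.sum_add_distrib]
    apply Finset.sum_le_sum; intro i _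
    apply Finset.sum_le_sum; intro j _
    nlinarith [sq_nonneg (Ubar i j - 2 * Uhat i j + U i j)]
  have hUbarU : frobSq (Ubar - U) ≤ (4 + 2 * ε) * frobSq (Uhat - U) := by linarith
  -- Step 3: cardinality bound on S k
  have hScard : ∀ k, ((S k).card : ℝ) * (δ k / 2) ^ 2 ≤ frobSq (Ubar - U) := by
    intro k
    have hsub : ∀ i ∈ S k, (δ k / 2) ^ 2 ≤ ∑ j, (Ubar i j - U i j) ^ 2 := by
      intro i hi
      rw [hS, Finset.mem_filter] at hi
      have hle := hi.2.2
      have hsq : Real.sqrt (∑ j, (Ubar i j - U i j) ^ 2) ^ 2 = ∑ j, (Ubar i j - U i j) ^ 2 :=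
        Real.sq_sqrt (by positivity)
      nlinarith [Real.sqrt_nonneg (∑ j, (Ubar i j - U i j) ^ 2), hδpos k]
    calc ((S k).card : ℝ) * (δ k / 2) ^ 2 = ∑ _i ∈ S k, (δ k / 2) ^ 2 := by
          rw [Finset.sum_const, nsmul_eq_mul]
      _ ≤ ∑ i ∈ S k, ∑ j, (Ubar i j - U i j) ^ 2 := Finset.sum_le_sum hsub
      _ ≤ ∑ i, ∑ j, (Ubar i j - U i j) ^ 2 :=
          Finset.sum_le_sum_of_subset_of_nonneg (Finset.subset_univ _)
            (fun i _ _ => by positivity)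
      _ = frobSq (Ubar - U) := by simp [frobSq, Matrix.sub_apply]
  have hcardlt : ∀ k, (S k).card < nk k := by
    intro k
    have h := hcond k
    have hδk := hδpos k
    have hs := hScard k
    have hcast : ((S k).card : ℝ) < (nk k : ℝ) := by
      have hd2 : (0:ℝ) < δ k ^ 2 := by positivity
      rw [div_lt_iff₀ hd2] at h
      nlinarith
    exact_mod_cast hcast
  -- Step 4: T_k nonempty
  have hT : ∀ k, ∃ i, g i = k ∧ i ∉ S k := by
    intro k
    by_contra hc
    push_neg at hc
    have hsub : (Finset.univ.filter (fun i => g i = k)) ⊆ S k := by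
      intro i hi
      rw [Finset.mem_filter] at hi
      exact hc i hi.2
    have := Finset.card_le_card hsub
    rw [← hnk k] at this
    exact absurd this (Nat.not_le.mpr (hcardlt k))
  -- Step 5: for i ∉ S (g i), the row distance is small
  have hnotS : ∀ i, i ∉ S (g i) →
      Real.sqrt (∑ j, (Xhat (ghat i) j - X (g i) j) ^ 2) < δ (g i) / 2 := by
    intro i hi
    rw [hS, Finset.mem_filter] at hi
    simp only [Finset.mem_univ, true_and, not_and, not_le] at hi
    have h2 := hi
    calc Real.sqrt (∑ j, (Xhat (ghat i) j - X (g i) j) ^ 2)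
        = Real.sqrt (∑ j, (Ubar i j - U i j) ^ 2) := by
          congr 1
          exact Finset.sum_congr rfl fun j _ => by rw [hUrow, hUbarrow]
      _ < δ (g i) / 2 := h2
  -- Step 6: separation
  have hsep : ∀ i i', i ∉ S (g i) → i' ∉ S (g i') → ghat i = ghat i' → g i = g i' := by
    intro i i' hi hi' hgh
    by_contra hne
    have ha := hnotS i hi
    have hb := hnotS i' hi'
    rw [hgh] at ha
    have htri := sqrt_tri (X (g i)) (Xhat (ghat i')) (X (g i'))
    rw [sqrt_symm (X (g i)) (Xhat (ghat i'))] at htri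
    have hd1 := hδ (g i') (g i) hne
    have hd2 := hδ (g i) (g i') (Ne.symm hne)
    rw [sqrt_symm (X (g i')) (X (g i))] at hd2
    linarith
  -- Step 7: construct the permutation
  choose t ht1 ht2 using hT
  have htS : ∀ k, t k ∉ S (g (t k)) := fun k => by rw [ht1]; exact ht2 k
  have hinj : Function.Injective (fun k => ghat (t k)) := by
    intro k l h
    have := hsep (t k) (t l) (htS k) (htS l) h
    rwa [ht1, ht1] at this
  have hbij := Finite.injective_iff_bijective.mp hinj
  refine ⟨Equiv.ofBijective _ hbij, ?_⟩
  intro i hi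
  obtain ⟨k', hk'⟩ := hbij.2 (ghat i)
  have hkey := hsep i (t k') hi (htS k') hk'.symm
  rw [ht1] at hkey
  show ghat i = ghat (t (g i))
  rw [hkey]
  exact hk'.symm
end

section
/- Let Û, U ∈ ℝ^{n×K}, with all rows of U nonzero, and let I_+ = {i : Û_{i*} ≠ 0}. Let Û' be the matrix with rows Û_{i*}/‖Û_{i*}‖ for i ∈ I_+, and U'' the matrix with rows U_{i*}/‖U_{i*}‖ for i ∈ I_+. Then ‖Û' − U''‖_{2,1} ≤ 2 √( ‖Û − U‖_F² · Σ_{i=1}^n ‖U_{i*}‖^{-2} ), where ‖M‖_{2,1} = Σ_i ‖M_{i*}‖ is the sum of row Euclidean norms. -/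
open Matrix

/-- Euclidean norm of a row vector. -/
noncomputable def rowNorm {K : ℕ} (v : Fin K → ℝ) : ℝ :=
  Real.sqrt (∑ j, (v j) ^ 2)

lemma rowNorm_eq_norm {K : ℕ} (v : Fin K → ℝ) :
    rowNorm v = ‖(WithLp.equiv 2 (Fin K → ℝ)).symm v‖ := by
  rw [EuclideanSpace.norm_eq, rowNorm]
  congr 1
  apply Finset.sum_congr rfl
  intro j _
  rw [Real.norm_eq_abs, sq_abs]
  rfl

lemma key_norm_ineq {E : Type*} [NormedAddCommGroup E] [NormedSpace ℝ E]
    (u v : E) (hu : u ≠ 0) (hv : v ≠ 0) :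
    ‖‖u‖⁻¹ • u - ‖v‖⁻¹ • v‖ ≤ 2 * ‖u - v‖ / ‖v‖ := by
  have hnu : (0:ℝ) < ‖u‖ := norm_pos_iff.mpr hu
  have hnv : (0:ℝ) < ‖v‖ := norm_pos_iff.mpr hv
  have decomp : ‖u‖⁻¹ • u - ‖v‖⁻¹ • v
      = ‖v‖⁻¹ • (u - v) + (‖u‖⁻¹ - ‖v‖⁻¹) • u := by
    rw [smul_sub, sub_smul]; abel
  rw [decomp]
  calc ‖‖v‖⁻¹ • (u - v) + (‖u‖⁻¹ - ‖v‖⁻¹) • u‖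
      ≤ ‖‖v‖⁻¹ • (u - v)‖ + ‖(‖u‖⁻¹ - ‖v‖⁻¹) • u‖ := norm_add_le _ _
    _ = ‖v‖⁻¹ * ‖u - v‖ + |‖u‖⁻¹ - ‖v‖⁻¹| * ‖u‖ := by
        rw [norm_smul, norm_smul, Real.norm_eq_abs, Real.norm_eq_abs,
          abs_of_pos (inv_pos.mpr hnv)]
    _ ≤ ‖v‖⁻¹ * ‖u - v‖ + ‖v‖⁻¹ * ‖u - v‖ := by
        gcongr _ + ?_
        rw [inv_sub_inv hnu.ne' hnv.ne', abs_div,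
          abs_of_pos (by positivity : (0:ℝ) < ‖u‖ * ‖v‖),
          div_mul_eq_mul_div, mul_comm ‖u‖ ‖v‖, mul_div_assoc]
        have hq : ‖u‖ / (‖v‖ * ‖u‖) = ‖v‖⁻¹ := by
          rw [mul_comm, ← div_div, div_self hnu.ne', one_div]
        rw [hq, mul_comm]
        gcongr
        calc |‖v‖ - ‖u‖| ≤ ‖v - u‖ := abs_norm_sub_norm_le v u
          _ = ‖u - v‖ := norm_sub_rev v u
    _ = 2 * ‖u - v‖ / ‖v‖ := by ring

/-- (2,1)-norm bound for row-normalized matrices. -/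
theorem stmt13 (n K : ℕ) (Uhat U : Matrix (Fin n) (Fin K) ℝ)
    (hU : ∀ i, ∃ j, U i j ≠ 0)
    (Iplus : Finset (Fin n))
    (hIplus : ∀ i, i ∈ Iplus ↔ ∃ j, Uhat i j ≠ 0) :
    ∑ i ∈ Iplus,
        rowNorm (fun j => Uhat i j / rowNorm (Uhat i) - U i j / rowNorm (U i))
      ≤ 2 * Real.sqrt (frobSq (Uhat - U) * ∑ i, (∑ j, (U i j) ^ 2)⁻¹) := by
  set a : Fin n → ℝ := fun i => rowNorm (fun j => Uhat i j - U i j) with ha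
  set b : Fin n → ℝ := fun i => (rowNorm (U i))⁻¹ with hb
  have ha0 : ∀ i, 0 ≤ a i := fun i => Real.sqrt_nonneg _
  have hb0 : ∀ i, 0 ≤ b i := fun i => inv_nonneg.mpr (Real.sqrt_nonneg _)
  -- step 1 : rowwise bound
  have step1 : ∀ i ∈ Iplus,
      rowNorm (fun j => Uhat i j / rowNorm (Uhat i) - U i j / rowNorm (U i))
        ≤ 2 * (a i * b i) := by
    intro i hi
    set u : EuclideanSpace ℝ (Fin K) := (WithLp.equiv 2 (Fin K → ℝ)).symm (Uhat i) with hudef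
    set v : EuclideanSpace ℝ (Fin K) := (WithLp.equiv 2 (Fin K → ℝ)).symm (U i) with hvdef
    have hu : u ≠ 0 := by
      obtain ⟨j, hj⟩ := (hIplus i).mp hi
      intro h
      exact hj (congrFun (congrArg (WithLp.equiv 2 (Fin K → ℝ)) h) j)
    have hv : v ≠ 0 := by
      obtain ⟨j, hj⟩ := hU i
      intro h
      exact hj (congrFun (congrArg (WithLp.equiv 2 (Fin K → ℝ)) h) j)
    have hfun : (fun j => Uhat i j / rowNorm (Uhat i) - U i j / rowNorm (U i))
        = (WithLp.equiv 2 (Fin K → ℝ)) (‖u‖⁻¹ • u - ‖v‖⁻¹ • v) := by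
      funext j
      show Uhat i j / rowNorm (Uhat i) - U i j / rowNorm (U i)
        = ‖u‖⁻¹ * Uhat i j - ‖v‖⁻¹ * U i j
      rw [rowNorm_eq_norm, rowNorm_eq_norm, div_eq_inv_mul, div_eq_inv_mul]
    have heq : rowNorm (fun j => Uhat i j / rowNorm (Uhat i) - U i j / rowNorm (U i))
        = ‖‖u‖⁻¹ • u - ‖v‖⁻¹ • v‖ := by
      rw [hfun, rowNorm_eq_norm, Equiv.symm_apply_apply]
    have heq2 : a i = ‖u - v‖ := by
      rw [ha]
      simp only
      rw [rowNorm_eq_norm]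
      congr 1
    have heq3 : b i = ‖v‖⁻¹ := by rw [hb]; simp only; rw [rowNorm_eq_norm]
    rw [heq, heq2, heq3, ← div_eq_mul_inv, ← mul_div_assoc]
    exact key_norm_ineq u v hu hv
  have step2 : ∑ i ∈ Iplus,
      rowNorm (fun j => Uhat i j / rowNorm (Uhat i) - U i j / rowNorm (U i))
        ≤ 2 * ∑ i, a i * b i := by
    calc _ ≤ ∑ i ∈ Iplus, 2 * (a i * b i) := Finset.sum_le_sum step1
      _ ≤ ∑ i, 2 * (a i * b i) := by
          apply Finset.sum_le_sum_of_subset_of_nonneg (Finset.subset_univ _)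
          intro i _ _
          have := ha0 i; have := hb0 i; positivity
      _ = 2 * ∑ i, a i * b i := by rw [Finset.mul_sum]
  refine step2.trans ?_
  gcongr
  -- Cauchy-Schwarz
  have hcs : (∑ i, a i * b i) ^ 2 ≤ (∑ i, a i ^ 2) * (∑ i, b i ^ 2) :=
    Finset.sum_mul_sq_le_sq_mul_sq Finset.univ a b
  have hsum_nonneg : (0:ℝ) ≤ ∑ i, a i * b i :=
    Finset.sum_nonneg fun i _ => mul_nonneg (ha0 i) (hb0 i)
  have hle : ∑ i, a i * b i ≤ Real.sqrt ((∑ i, a i ^ 2) * (∑ i, b i ^ 2)) := by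
    rw [← Real.sqrt_sq hsum_nonneg]
    exact Real.sqrt_le_sqrt hcs
  refine hle.trans (le_of_eq ?_)
  have h1 : (∑ i, a i ^ 2) = frobSq (Uhat - U) := by
    rw [frobSq]
    apply Finset.sum_congr rfl
    intro i _
    rw [ha]
    simp only
    rw [rowNorm, Real.sq_sqrt (Finset.sum_nonneg fun j _ => sq_nonneg _)]
    apply Finset.sum_congr rfl
    intro j _
    simp [Matrix.sub_apply]
  have h2 : (∑ i, b i ^ 2) = ∑ i, (∑ j, (U i j) ^ 2)⁻¹ := by
    apply Finset.sum_congr rfl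
    intro i _
    rw [hb]
    simp only
    rw [rowNorm, ← Real.sqrt_inv,
      Real.sq_sqrt (inv_nonneg.mpr (Finset.sum_nonneg fun j _ => sq_nonneg _))]
  rw [h1, h2]
end

section
/- Let Θ be an n×K membership matrix with community sizes n_1,...,n_K, B = α(λ I_K + (1−λ)𝟏𝟏^T) with α > 0 and 0 < λ < 1, and P = ΘBΘ^T. Then the smallest nonzero eigenvalue of P is at least n_min · α · λ, where n_min = min_k n_k. -/
open Matrix

/-- Smallest nonzero eigenvalue of P = ΘBΘᵀ for
B = α(λI + (1−λ)𝟏𝟏ᵀ) is at least n_min·α·λ. -/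
theorem stmt16 (n K : ℕ) (hK : 0 < K) (g : Fin n → Fin K)
    (Θ : Matrix (Fin n) (Fin K) ℝ)
    (hΘ : ∀ i k, Θ i k = if g i = k then 1 else 0)
    (nk : Fin K → ℕ)
    (hnk : ∀ k, nk k = (Finset.univ.filter (fun i => g i = k)).card)
    (nmin : ℕ) (hmin : ∀ k, nmin ≤ nk k) (hmem : ∃ k, nmin = nk k)
    (α lam : ℝ) (hα : 0 < α) (hlam0 : 0 < lam) (hlam1 : lam < 1)
    (B : Matrix (Fin K) (Fin K) ℝ)
    (hB : B = α • (lam • (1 : Matrix (Fin K) (Fin K) ℝ)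
        + (1 - lam) • (Matrix.of fun _ _ => (1 : ℝ))))
    (P : Matrix (Fin n) (Fin n) ℝ) (hP : P = Θ * B * Θᵀ) :
    ∀ (μ : ℝ) (v : Fin n → ℝ), v ≠ 0 → P.mulVec v = μ • v → μ ≠ 0 →
      (nmin : ℝ) * α * lam ≤ μ := by
  intro μ v hv hev hμ
  set u : Fin K → ℝ := Θᵀ.mulVec v with hu
  set x : Fin K → ℝ := B.mulVec u with hx
  have hPv : P.mulVec v = Θ.mulVec x := by
    rw [hP, hx, hu, ← Matrix.mulVec_mulVec, ← Matrix.mulVec_mulVec]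
  -- v i = x (g i) / μ
  have hxv : ∀ i, μ * v i = x (g i) := by
    intro i
    have := congrFun (hPv.symm.trans hev) i
    have h2 : (Θ.mulVec x) i = x (g i) := by
      simp only [Matrix.mulVec, dotProduct, hΘ, ite_mul, one_mul, zero_mul]
      simp
    rw [h2] at this
    simpa [Pi.smul_apply, smul_eq_mul] using this.symm
  set w : Fin K → ℝ := fun k => μ⁻¹ * x k with hwdef
  have hw : ∀ i, v i = w (g i) := by
    intro i
    have := hxv i
    show v i = μ⁻¹ * x (g i)
    rw [eq_inv_mul_iff_mul_eq₀ hμ]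
    linarith [hxv i]
  -- u k = nk k * w k
  have huk : ∀ k, u k = (nk k : ℝ) * w k := by
    intro k
    have h1 : u k = ∑ i : Fin n, (if g i = k then v i else 0) := by
      simp [hu, Matrix.mulVec, dotProduct, Matrix.transpose_apply, hΘ, ite_mul]
    rw [h1, ← Finset.sum_filter]
    have h2 : ∀ i ∈ Finset.univ.filter (fun i => g i = k), v i = w k := by
      intro i hi
      rw [hw i, (Finset.mem_filter.mp hi).2]
    rw [Finset.sum_congr rfl h2, Finset.sum_const, hnk k, nsmul_eq_mul]
  -- v ⬝ v = ∑ k, nk k * (w k)^2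
  have hvv : v ⬝ᵥ v = ∑ k : Fin K, (nk k : ℝ) * (w k)^2 := by
    simp only [dotProduct]
    rw [← Finset.sum_fiberwise (Finset.univ) g (fun i => v i * v i)]
    refine Finset.sum_congr rfl fun k _ => ?_
    have h2 : ∀ i ∈ Finset.univ.filter (fun i => g i = k), v i * v i = w k * w k := by
      intro i hi
      rw [hw i, (Finset.mem_filter.mp hi).2]
    rw [Finset.sum_congr rfl h2, Finset.sum_const, hnk k, nsmul_eq_mul]
    ring
  -- u ⬝ u ≥ nmin * (v ⬝ v)
  have huu : (nmin : ℝ) * (v ⬝ᵥ v) ≤ u ⬝ᵥ u := by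
    rw [hvv, Finset.mul_sum]
    simp only [dotProduct, huk]
    refine Finset.sum_le_sum fun k _ => ?_
    have h1 : (nmin : ℝ) ≤ (nk k : ℝ) := Nat.cast_le.mpr (hmin k)
    have h2 : (0:ℝ) ≤ (nk k : ℝ) * (w k)^2 := by positivity
    calc (nmin : ℝ) * ((nk k : ℝ) * (w k)^2) ≤ (nk k : ℝ) * ((nk k : ℝ) * (w k)^2) := by
          exact mul_le_mul_of_nonneg_right h1 h2
      _ = (nk k : ℝ) * w k * ((nk k : ℝ) * w k) := by ring
  -- quadratic form identity
  have hquad : μ * (v ⬝ᵥ v) = α * lam * (u ⬝ᵥ u) + α * (1 - lam) * (∑ k, u k)^2 := by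
    have h1 : v ⬝ᵥ P.mulVec v = u ⬝ᵥ x := by
      rw [hPv, Matrix.dotProduct_mulVec, hu, Matrix.mulVec_transpose]
    have h2 : v ⬝ᵥ P.mulVec v = μ * (v ⬝ᵥ v) := by
      rw [hev, dotProduct_smul, smul_eq_mul]
    have h3 : u ⬝ᵥ x = α * lam * (u ⬝ᵥ u) + α * (1 - lam) * (∑ k, u k)^2 := by
      have hxk : ∀ k, x k = α * lam * u k + α * (1 - lam) * ∑ j, u j := by
        intro k
        have hterm : ∀ j, B k j * u j
            = α * lam * (if k = j then u j else 0) + α * (1 - lam) * u j := by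
          intro j
          rw [hB]
          simp only [Matrix.smul_apply, Matrix.add_apply, Matrix.one_apply, Matrix.of_apply,
            smul_eq_mul]
          split <;> ring
        simp only [hx, Matrix.mulVec, dotProduct]
        rw [Finset.sum_congr rfl fun j _ => hterm j, Finset.sum_add_distrib,
          ← Finset.mul_sum, ← Finset.mul_sum, Finset.sum_ite_eq]
        simp
      simp only [dotProduct]
      rw [Finset.sum_congr rfl fun k (_ : k ∈ Finset.univ) => by rw [hxk k]]
      have : ∀ k, u k * (α * lam * u k + α * (1 - lam) * ∑ j, u j)
          = α * lam * (u k * u k) + α * (1 - lam) * (u k * ∑ j, u j) := fun k => by ring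
      rw [Finset.sum_congr rfl fun k _ => this k, Finset.sum_add_distrib,
        ← Finset.mul_sum, ← Finset.mul_sum, ← Finset.sum_mul]
      ring
    rw [← h2, h1, h3]
  have hvpos : 0 < v ⬝ᵥ v := by
    obtain ⟨i, hi⟩ := Function.ne_iff.mp hv
    have : (0:ℝ) < v i * v i := mul_self_pos.mpr hi
    refine Finset.sum_pos' (fun j _ => mul_self_nonneg _) ⟨i, Finset.mem_univ i, this⟩
  have hfinal : (nmin : ℝ) * α * lam * (v ⬝ᵥ v) ≤ μ * (v ⬝ᵥ v) := by
    rw [hquad]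
    have h1 : (nmin : ℝ) * α * lam * (v ⬝ᵥ v) ≤ α * lam * (u ⬝ᵥ u) := by
      have := mul_le_mul_of_nonneg_left huu (by positivity : (0:ℝ) ≤ α * lam)
      linarith [this]
    have h2 : (0:ℝ) ≤ α * (1 - lam) * (∑ k, u k)^2 := by
      have h1l : (0:ℝ) ≤ 1 - lam := by linarith
      exact mul_nonneg (mul_nonneg hα.le h1l) (sq_nonneg _)
    linarith
  exact le_of_mul_le_mul_right hfinal hvpos
end
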